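/- arXiv:2507.18776 — 4 statements merged into one kernel-verified Lean document; each statement's English description precedes it below -/
import Mathlib

section
/- Every 8-regular K3-irregular simple graph has at least 17 vertices. -/
/-- The `K₃`-degree (triangle-degree) of a vertex `v` in a finite simple graph `G`:
the number of triangles (3-cliques) of `G` containing `v`. -/
def K3deg {V : Type*} (G : SimpleGraph V) [Fintype V] [DecidableEq V] [DecidableRel G.Adj]
    (v : V) : ℕ :=
  ((G.cliqueFinset 3).filter (fun t => v ∈ t)).card

set_option linter.unusedSectionVars false
set_option linter.unusedVariables false

open Finset

namespace K3aux

variable {V : Type*} [Fintype V] [DecidableEq V] (G : SimpleGraph V) [DecidableRel G.Adj]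

local notation "N" => G.neighborFinset

/-- ordered edge count within a finset -/
def eo (A : Finset V) : ℕ := ∑ x ∈ A, (N x ∩ A).card

variable {G}

lemma card_inter_eq_sum (x : V) (C : Finset V) :
    (N x ∩ C).card = ∑ y ∈ C, if x ∈ N y then 1 else 0 := by
  rw [inter_comm, ← Finset.filter_mem_eq_inter, Finset.card_filter]
  refine Finset.sum_congr rfl fun y _ => ?_
  refine if_congr ?_ rfl rfl
  simp only [SimpleGraph.mem_neighborFinset]
  exact G.adj_comm x y

lemma L_swap (A C : Finset V) :
    ∑ x ∈ A, (N x ∩ C).card = ∑ y ∈ C, (N y ∩ A).card := by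
  have h1 : ∀ x ∈ A, (N x ∩ C).card = ∑ y ∈ C, if x ∈ N y then 1 else 0 :=
    fun x _ => card_inter_eq_sum x C
  rw [Finset.sum_congr rfl h1, Finset.sum_comm]
  refine Finset.sum_congr rfl fun y _ => ?_
  rw [← Finset.card_filter, Finset.filter_mem_eq_inter, inter_comm]

lemma L_insert {w : V} {S : Finset V} (hw : w ∉ S) :
    eo G (insert w S) = eo G S + 2 * (N w ∩ S).card := by
  unfold eo
  rw [Finset.sum_insert hw]
  have h1 : N w ∩ insert w S = N w ∩ S := by
    ext a
    simp only [Finset.mem_inter, Finset.mem_insert]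
    constructor
    · rintro ⟨ha, rfl | ha'⟩
      · exact absurd ha (G.notMem_neighborFinset_self a)
      · exact ⟨ha, ha'⟩
    · rintro ⟨ha, ha'⟩; exact ⟨ha, Or.inr ha'⟩
  have h2 : ∀ x ∈ S, (N x ∩ insert w S).card
      = (N x ∩ S).card + (if w ∈ N x then 1 else 0) := by
    intro x _
    by_cases h : w ∈ N x
    · rw [if_pos h]
      have : N x ∩ insert w S = insert w (N x ∩ S) := by
        rw [inter_comm, Finset.insert_inter_of_mem h, inter_comm]
      rw [this, Finset.card_insert_of_notMem (fun hc => hw (Finset.mem_inter.1 hc).2)]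
    · rw [if_neg h]
      have : N x ∩ insert w S = N x ∩ S := by
        rw [inter_comm, Finset.insert_inter_of_notMem h, inter_comm]
      rw [this]
      omega
  rw [Finset.sum_congr rfl h2, Finset.sum_add_distrib, h1]
  have h3 : ∑ x ∈ S, (if w ∈ N x then 1 else 0) = (N w ∩ S).card := by
    rw [card_inter_eq_sum]
  rw [h3]; ring

lemma L_mono {A B : Finset V} (h : A ⊆ B) : eo G A ≤ eo G B := by
  unfold eo
  calc ∑ x ∈ A, (N x ∩ A).card ≤ ∑ x ∈ A, (N x ∩ B).card := by
        refine Finset.sum_le_sum fun x _ => Finset.card_le_card ?_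
        exact Finset.inter_subset_inter (Finset.Subset.refl _) h
    _ ≤ ∑ x ∈ B, (N x ∩ B).card :=
        Finset.sum_le_sum_of_subset h

lemma L_diff {A B : Finset V} (h : A ⊆ B) :
    eo G B ≤ eo G A + ∑ y ∈ B \ A, 2 * (N y ∩ B).card := by
  have hsplit : eo G B = ∑ x ∈ B \ A, (N x ∩ B).card + ∑ x ∈ A, (N x ∩ B).card :=
    (Finset.sum_sdiff h).symm
  have h2 : ∑ x ∈ A, (N x ∩ B).card ≤ eo G A + ∑ y ∈ B \ A, (N y ∩ B).card := by
    have hA : ∀ x ∈ A, (N x ∩ B).card ≤ (N x ∩ A).card + (N x ∩ (B \ A)).card := by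
      intro x _
      calc (N x ∩ B).card ≤ ((N x ∩ A) ∪ (N x ∩ (B \ A))).card := by
            refine Finset.card_le_card fun a ha => ?_
            rcases Finset.mem_inter.1 ha with ⟨h1, h2⟩
            by_cases hmem : a ∈ A
            · exact Finset.mem_union_left _ (Finset.mem_inter.2 ⟨h1, hmem⟩)
            · exact Finset.mem_union_right _
                (Finset.mem_inter.2 ⟨h1, Finset.mem_sdiff.2 ⟨h2, hmem⟩⟩)
        _ ≤ (N x ∩ A).card + (N x ∩ (B \ A)).card := Finset.card_union_le _ _
    calc ∑ x ∈ A, (N x ∩ B).card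
        ≤ ∑ x ∈ A, ((N x ∩ A).card + (N x ∩ (B \ A)).card) := Finset.sum_le_sum hA
      _ = eo G A + ∑ x ∈ A, (N x ∩ (B \ A)).card := by rw [Finset.sum_add_distrib]; rfl
      _ = eo G A + ∑ y ∈ B \ A, (N y ∩ A).card := by rw [L_swap]
      _ ≤ eo G A + ∑ y ∈ B \ A, (N y ∩ B).card := by
          refine Nat.add_le_add_left (Finset.sum_le_sum fun y _ => ?_) _
          exact Finset.card_le_card (Finset.inter_subset_inter (Finset.Subset.refl _) h)
  have h4 : ∑ y ∈ B \ A, 2 * (N y ∩ B).card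
      = ∑ y ∈ B \ A, (N y ∩ B).card + ∑ y ∈ B \ A, (N y ∩ B).card := by
    rw [← Finset.sum_add_distrib]
    refine Finset.sum_congr rfl fun y _ => by ring
  omega

lemma KEY (v : V) : 2 * K3deg G v = ∑ x ∈ N v, (N x ∩ N v).card := by
  classical
  set T := (G.cliqueFinset 3).filter (fun t => v ∈ t) with hT
  set P := (N v).sigma (fun x => N x ∩ N v) with hP
  have hmap : ∀ p ∈ P, ({v, p.1, p.2} : Finset V) ∈ T := by
    rintro ⟨x, y⟩ hp
    simp only [hP, Finset.mem_sigma, Finset.mem_inter, SimpleGraph.mem_neighborFinset] at hp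
    simp only [hT, Finset.mem_filter, SimpleGraph.mem_cliqueFinset_iff]
    exact ⟨SimpleGraph.is3Clique_triple_iff.2 ⟨hp.1, hp.2.2, hp.2.1⟩, by simp⟩
  have aux : ∀ (b c : V), G.Adj v b → G.Adj v c → G.Adj b c → ∀ t : Finset V,
      t = {v, b, c} →
      (P.filter (fun p => ({v, p.1, p.2} : Finset V) = t)).card = 2 := by
    intro b c hvb hvc hbc t ht
    have hbc' : b ≠ c := G.ne_of_adj hbc
    have hset : P.filter (fun p => ({v, p.1, p.2} : Finset V) = t)
        = {⟨b, c⟩, ⟨c, b⟩} := by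
      ext ⟨x, y⟩
      simp only [Finset.mem_filter, hP, Finset.mem_sigma, Finset.mem_inter,
        SimpleGraph.mem_neighborFinset, Finset.mem_insert, Finset.mem_singleton, ht,
        Sigma.mk.inj_iff, heq_eq_eq]
      constructor
      · rintro ⟨⟨hvx, hxy, hvy⟩, heq⟩
        have hxm : x ∈ ({v, b, c} : Finset V) := by
          rw [← heq]; simp
        have hym : y ∈ ({v, b, c} : Finset V) := by
          rw [← heq]; simp
        simp only [Finset.mem_insert, Finset.mem_singleton] at hxm hym
        have hxv : x ≠ v := fun h => G.irrefl (h ▸ hvx)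
        have hyv : y ≠ v := fun h => G.irrefl (h ▸ hvy)
        have hxyne : x ≠ y := G.ne_of_adj hxy
        rcases hxm with h1 | h1 | h1
        · exact absurd h1 hxv
        · subst h1
          rcases hym with h2 | h2 | h2
          · exact absurd h2 hyv
          · exact absurd h2.symm hxyne
          · exact Or.inl ⟨rfl, h2⟩
        · subst h1
          rcases hym with h2 | h2 | h2
          · exact absurd h2 hyv
          · exact Or.inr ⟨rfl, h2⟩
          · exact absurd h2.symm hxyne
      · rintro (⟨rfl, rfl⟩ | ⟨rfl, rfl⟩)
        · exact ⟨⟨hvb, hbc, hvc⟩, rfl⟩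
        · refine ⟨⟨hvc, hbc.symm, hvb⟩, ?_⟩
          ext z; simp; tauto
    rw [hset]
    rw [Finset.card_insert_of_notMem, Finset.card_singleton]
    simp only [Finset.mem_singleton, Sigma.mk.inj_iff, heq_eq_eq, not_and]
    intro h; exact absurd h hbc'
  have hfib : ∀ t ∈ T, (P.filter (fun p => ({v, p.1, p.2} : Finset V) = t)).card = 2 := by
    intro t htT
    simp only [hT, Finset.mem_filter, SimpleGraph.mem_cliqueFinset_iff] at htT
    obtain ⟨hcl, hvt⟩ := htT
    obtain ⟨a, b, c, hab, hac, hbc, rfl⟩ := SimpleGraph.is3Clique_iff.1 hcl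
    simp only [Finset.mem_insert, Finset.mem_singleton] at hvt
    rcases hvt with rfl | rfl | rfl
    · exact aux b c hab hac hbc _ rfl
    · refine aux a c hab.symm hbc hac _ ?_
      exact Finset.insert_comm _ _ _
    · refine aux a b hac.symm hbc.symm hab _ ?_
      ext z; simp; tauto
  have hPcard : P.card = 2 * T.card := by
    rw [Finset.card_eq_sum_card_fiberwise hmap, Finset.sum_congr rfl hfib,
      Finset.sum_const, smul_eq_mul, mul_comm]
  have hPcard2 : P.card = ∑ x ∈ N v, (N x ∩ N v).card := Finset.card_sigma _ _
  have : K3deg G v = T.card := rfl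
  omega

lemma L_tri3 : (3 : ℕ) ∣ ∑ v, K3deg G v := by
  classical
  have h1 : ∑ v, K3deg G v = ∑ t ∈ G.cliqueFinset 3, (3 : ℕ) := by
    unfold K3deg
    have h2 : ∀ v : V, ((G.cliqueFinset 3).filter (fun t => v ∈ t)).card
        = ∑ t ∈ G.cliqueFinset 3, if v ∈ t then 1 else 0 := fun v => Finset.card_filter _ _
    rw [Finset.sum_congr rfl (fun v _ => h2 v), Finset.sum_comm]
    refine Finset.sum_congr rfl fun t ht => ?_
    have h3 : ∑ v ∈ univ, (if v ∈ t then 1 else 0) = t.card := by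
      rw [← Finset.card_filter, Finset.filter_mem_eq_inter, Finset.univ_inter]
    rw [h3, (SimpleGraph.mem_cliqueFinset_iff.1 ht).card_eq]
  rw [h1, Finset.sum_const, smul_eq_mul]
  exact dvd_mul_left 3 _


lemma KEY' (v : V) : 2 * K3deg G v = eo G (N v) := KEY v

section WithReg

variable (hreg : G.IsRegularOfDegree 8)
include hreg

lemma hN (v : V) : (N v).card = 8 := by
  rw [SimpleGraph.card_neighborFinset_eq_degree]; exact hreg v

lemma L_sum56 (v : V) : ∑ u ∈ univ.erase v, (N v ∩ N u).card = 56 := by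
  calc ∑ u ∈ univ.erase v, (N v ∩ N u).card
      = ∑ u ∈ univ.erase v, (N u ∩ N v).card :=
        Finset.sum_congr rfl fun u _ => by rw [inter_comm]
    _ = ∑ y ∈ N v, (N y ∩ univ.erase v).card := L_swap _ _
    _ = ∑ y ∈ N v, 7 := by
        refine Finset.sum_congr rfl fun y hy => ?_
        have h1 : N y ∩ univ.erase v = (N y).erase v := by
          ext a
          simp only [Finset.mem_inter, Finset.mem_erase, Finset.mem_univ, and_true]
          tauto
        have h2 : v ∈ N y := by
          rw [SimpleGraph.mem_neighborFinset] at hy ⊢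
          exact hy.symm
        rw [h1, Finset.card_erase_of_mem h2, hN hreg]
    _ = 56 := by
        rw [Finset.sum_const, hN hreg, smul_eq_mul]

lemma L_union {v w : V} (hne : v ≠ w) (hnadj : ¬ G.Adj v w) :
    16 ≤ (N v ∩ N w).card + (Fintype.card V - 2) := by
  have hsub : N v ∪ N w ⊆ (univ.erase v).erase w := by
    intro a ha
    have h1 : a ≠ w ∧ a ≠ v := by
      rcases Finset.mem_union.1 ha with h | h
      · rw [SimpleGraph.mem_neighborFinset] at h
        exact ⟨fun hc => hnadj (hc ▸ h), fun hc => G.irrefl (hc ▸ h)⟩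
      · rw [SimpleGraph.mem_neighborFinset] at h
        exact ⟨fun hc => G.irrefl (hc ▸ h), fun hc => hnadj ((hc ▸ h).symm)⟩
    exact Finset.mem_erase.2 ⟨h1.1, Finset.mem_erase.2 ⟨h1.2, Finset.mem_univ a⟩⟩
  have hcards : (N v ∪ N w).card + (N v ∩ N w).card = 16 := by
    rw [Finset.card_union_add_card_inter, hN hreg, hN hreg]
  have hle := Finset.card_le_card hsub
  have hw : w ∈ univ.erase v := Finset.mem_erase.2 ⟨hne.symm, Finset.mem_univ w⟩
  rw [Finset.card_erase_of_mem hw, Finset.card_erase_of_mem (Finset.mem_univ v),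
    Finset.card_univ] at hle
  have hcV : 8 ≤ Fintype.card V := by
    have h1 : (N v).card ≤ Fintype.card V := by
      rw [← Finset.card_univ]; exact Finset.card_le_card (Finset.subset_univ _)
    rw [hN hreg] at h1; exact h1
  omega

variable (hirr : ∀ u w : V, K3deg G u = K3deg G w → u = w)
include hirr

lemma L_c7 {v w : V} (hvw : v ≠ w) : (N v ∩ N w).card ≤ 7 := by
  by_contra hc
  push_neg at hc
  have hsub : N v ∩ N w ⊆ N v := Finset.inter_subset_left
  have hNv8 := hN hreg v
  have h8 : (N v ∩ N w).card ≤ 8 := hNv8 ▸ Finset.card_le_card hsub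
  have heq1 : N v ∩ N w = N v := Finset.eq_of_subset_of_card_le hsub (by omega)
  have hsub2 : N v ⊆ N w := heq1 ▸ Finset.inter_subset_right
  have heqN : N v = N w :=
    Finset.eq_of_subset_of_card_le hsub2 (by rw [hN hreg, hN hreg])
  have : 2 * K3deg G v = 2 * K3deg G w := by
    rw [KEY', KEY', heqN]
  exact hvw (hirr v w (by omega))

lemma L_adj6 {v w : V} (h : G.Adj v w) : (N v ∩ N w).card ≤ 6 := by
  by_contra hc
  push_neg at hc
  have hvw : v ≠ w := G.ne_of_adj h
  have hwNv : w ∈ N v := (SimpleGraph.mem_neighborFinset G v w).2 h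
  have hvNw : v ∈ N w := (SimpleGraph.mem_neighborFinset G w v).2 h.symm
  have hwS : w ∉ N v ∩ N w := fun hm => G.notMem_neighborFinset_self w (Finset.mem_inter.1 hm).2
  have hvS : v ∉ N v ∩ N w := fun hm => G.notMem_neighborFinset_self v (Finset.mem_inter.1 hm).1
  have hsub1 : N v ∩ N w ⊆ (N v).erase w := fun a ha =>
    Finset.mem_erase.2 ⟨fun hc' => hwS (hc' ▸ ha), (Finset.mem_inter.1 ha).1⟩
  have hsub2 : N v ∩ N w ⊆ (N w).erase v := fun a ha =>
    Finset.mem_erase.2 ⟨fun hc' => hvS (hc' ▸ ha), (Finset.mem_inter.1 ha).2⟩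
  have hc1 : ((N v).erase w).card = 7 := by
    rw [Finset.card_erase_of_mem hwNv, hN hreg]
  have hc2 : ((N w).erase v).card = 7 := by
    rw [Finset.card_erase_of_mem hvNw, hN hreg]
  have heq1 : N v ∩ N w = (N v).erase w :=
    Finset.eq_of_subset_of_card_le hsub1 (by omega)
  have heq2 : N v ∩ N w = (N w).erase v :=
    Finset.eq_of_subset_of_card_le hsub2 (by omega)
  have hNv : insert w (N v ∩ N w) = N v := by rw [heq1, Finset.insert_erase hwNv]
  have hNw : insert v (N v ∩ N w) = N w := by rw [heq2, Finset.insert_erase hvNw]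
  have hwint : N w ∩ (N v ∩ N w) = N v ∩ N w :=
    Finset.inter_eq_right.2 Finset.inter_subset_right
  have hvint : N v ∩ (N v ∩ N w) = N v ∩ N w :=
    Finset.inter_eq_right.2 Finset.inter_subset_left
  have heo1 : eo G (N v) = eo G (N v ∩ N w) + 2 * (N v ∩ N w).card := by
    conv_lhs => rw [← hNv]
    rw [L_insert hwS, hwint]
  have heo2 : eo G (N w) = eo G (N v ∩ N w) + 2 * (N v ∩ N w).card := by
    conv_lhs => rw [← hNw]
    rw [L_insert hvS, hvint]
  have h1 := KEY' (G := G) v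
  have h2 := KEY' (G := G) w
  exact hvw (hirr v w (by omega))

end WithReg

variable (G) in
/-- non-neighbors of `v` (excluding `v`) -/
def Rv (v : V) : Finset V := univ \ insert v (N v)

lemma mem_Rv {v w : V} : w ∈ Rv G v ↔ w ≠ v ∧ ¬ G.Adj v w := by
  unfold Rv
  simp only [Finset.mem_sdiff, Finset.mem_univ, true_and, Finset.mem_insert,
    SimpleGraph.mem_neighborFinset, not_or]

lemma v_notMem_Rv {v : V} : v ∉ Rv G v := by simp [mem_Rv]

lemma Rv_disj {v : V} : Disjoint (N v) (Rv G v) := by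
  rw [Finset.disjoint_left]
  intro a ha hR
  exact (mem_Rv.1 hR).2 ((SimpleGraph.mem_neighborFinset _ _ _).1 ha)

lemma NR_union {v : V} : N v ∪ Rv G v = univ.erase v := by
  ext a
  simp only [Finset.mem_union, mem_Rv, Finset.mem_erase, Finset.mem_univ, and_true,
    SimpleGraph.mem_neighborFinset]
  constructor
  · rintro (h | ⟨h1, _⟩)
    · exact (G.ne_of_adj h).symm
    · exact h1
  · intro h
    by_cases hadj : G.Adj v a
    · exact Or.inl hadj
    · exact Or.inr ⟨h, hadj⟩

section WithReg2

variable (hreg : G.IsRegularOfDegree 8)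
include hreg

lemma card_V_ge8 (v : V) : 8 ≤ Fintype.card V := by
  have h1 : (N v).card ≤ Fintype.card V := by
    rw [← Finset.card_univ]; exact Finset.card_le_card (Finset.subset_univ _)
  rw [hN hreg] at h1; exact h1

lemma card_Rv (v : V) : (Rv G v).card = Fintype.card V - 9 := by
  unfold Rv
  rw [Finset.card_sdiff_of_subset (Finset.subset_univ _), Finset.card_univ,
    Finset.card_insert_of_notMem (G.notMem_neighborFinset_self v), hN hreg]

lemma L_split (v : V) :
    2 * K3deg G v + ∑ w ∈ Rv G v, (N v ∩ N w).card = 56 := by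
  have h1 := L_sum56 hreg v
  rw [← NR_union (G := G) (v := v), Finset.sum_union Rv_disj] at h1
  have h2 : ∑ x ∈ N v, (N v ∩ N x).card = 2 * K3deg G v := by
    rw [KEY v]
    exact Finset.sum_congr rfl fun x _ => by rw [inter_comm]
  omega

lemma L_Rdeg {v w : V} (hw : w ∈ Rv G v) :
    (N w ∩ N v).card + (N w ∩ Rv G v).card = 8 := by
  obtain ⟨hne, hnadj⟩ := mem_Rv.1 hw
  have hdisj : Disjoint (N w ∩ N v) (N w ∩ Rv G v) := by
    rw [Finset.disjoint_left]
    intro a ha1 ha2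
    exact (Finset.disjoint_left.1 (Rv_disj (v := v))) (Finset.mem_inter.1 ha1).2
      (Finset.mem_inter.1 ha2).2
  have hunion : (N w ∩ N v) ∪ (N w ∩ Rv G v) = N w := by
    rw [← Finset.inter_union_distrib_left, NR_union]
    refine Finset.inter_eq_left.2 fun a ha => ?_
    refine Finset.mem_erase.2 ⟨fun hc => ?_, Finset.mem_univ a⟩
    rw [SimpleGraph.mem_neighborFinset] at ha
    exact hnadj (hc ▸ ha).symm
  rw [← Finset.card_union_of_disjoint hdisj, hunion, hN hreg]

lemma mR_le6 (hc16 : Fintype.card V ≤ 16) {v w : V} (hw : w ∈ Rv G v) :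
    (N w ∩ Rv G v).card ≤ 6 := by
  have hsub : N w ∩ Rv G v ⊆ (Rv G v).erase w := by
    intro a ha
    obtain ⟨h1, h2⟩ := Finset.mem_inter.1 ha
    exact Finset.mem_erase.2 ⟨fun hc => G.notMem_neighborFinset_self w (hc ▸ h1), h2⟩
  calc (N w ∩ Rv G v).card ≤ ((Rv G v).erase w).card := Finset.card_le_card hsub
    _ = (Rv G v).card - 1 := Finset.card_erase_of_mem hw
    _ ≤ 6 := by
        have := card_Rv hreg v
        omega

variable (hirr : ∀ u w : V, K3deg G u = K3deg G w → u = w)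
include hirr

lemma SR_upper (v : V) :
    ∑ w ∈ Rv G v, (N v ∩ N w).card ≤ 7 * (Fintype.card V - 9) := by
  calc ∑ w ∈ Rv G v, (N v ∩ N w).card ≤ (Rv G v).card • 7 := by
        refine Finset.sum_le_card_nsmul _ _ _ fun w hw => ?_
        exact L_c7 hreg hirr (fun hc => (mem_Rv.1 hw).1 hc.symm)
    _ = 7 * (Fintype.card V - 9) := by rw [card_Rv hreg, smul_eq_mul, mul_comm]

lemma SR_lower (v : V) :
    (Fintype.card V - 9) * (18 - Fintype.card V) ≤ ∑ w ∈ Rv G v, (N v ∩ N w).card := by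
  have h8 := card_V_ge8 hreg v
  calc (Fintype.card V - 9) * (18 - Fintype.card V)
      = (Rv G v).card • (18 - Fintype.card V) := by rw [card_Rv hreg, smul_eq_mul]
    _ ≤ ∑ w ∈ Rv G v, (N v ∩ N w).card := by
        refine Finset.card_nsmul_le_sum _ _ _ fun w hw => ?_
        obtain ⟨hne, hnadj⟩ := mem_Rv.1 hw
        have := L_union hreg (fun hc => hne hc.symm) hnadj
        omega

lemma interval_bound {lo hi : ℕ} (h : ∀ v : V, K3deg G v ∈ Finset.Icc lo hi) :
    Fintype.card V ≤ hi + 1 - lo := by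
  have hinj : Function.Injective (K3deg G) := fun a b hab => hirr a b hab
  calc Fintype.card V = (univ.image (K3deg G)).card := by
        rw [Finset.card_image_of_injective _ hinj, Finset.card_univ]
    _ ≤ (Finset.Icc lo hi).card := Finset.card_le_card (by
        intro x hx
        obtain ⟨v, _, rfl⟩ := Finset.mem_image.1 hx
        exact h v)
    _ = hi + 1 - lo := Nat.card_Icc lo hi

omit hreg hirr in
lemma NRsub_erase {v w : V} : N w ∩ Rv G v ⊆ (Rv G v).erase w := fun a ha =>
  Finset.mem_erase.2 ⟨fun hc => G.notMem_neighborFinset_self w (hc ▸ (Finset.mem_inter.1 ha).1),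
    (Finset.mem_inter.1 ha).2⟩

lemma case16 (h16 : Fintype.card V = 16) : False := by
  classical
  -- basic facts
  have h7R : ∀ v : V, (Rv G v).card = 7 := by
    intro v; rw [card_Rv hreg, h16]
  have heoR : ∀ v : V, eo G (Rv G v) = 2 * K3deg G v := by
    intro v
    have hsum8 : ∑ w ∈ Rv G v, ((N w ∩ N v).card + (N w ∩ Rv G v).card) = 56 := by
      rw [Finset.sum_congr rfl (fun w hw => L_Rdeg hreg hw), Finset.sum_const, h7R v,
        smul_eq_mul]
    rw [Finset.sum_add_distrib] at hsum8
    have hcomm : ∑ w ∈ Rv G v, (N w ∩ N v).card = ∑ w ∈ Rv G v, (N v ∩ N w).card :=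
      Finset.sum_congr rfl fun w _ => by rw [inter_comm]
    have hsplit := L_split hreg v
    have : eo G (Rv G v) = ∑ w ∈ Rv G v, (N w ∩ Rv G v).card := rfl
    omega
  have ha4 : ∀ v : V, 4 ≤ K3deg G v := by
    intro v
    have h1 := L_split hreg v
    have h2 := SR_upper hreg hirr v
    rw [h16] at h2
    omega
  have hm6 : ∀ v w : V, w ∈ Rv G v → (N w ∩ Rv G v).card ≤ 6 :=
    fun v w hw => mR_le6 hreg (by omega) hw
  have ha21 : ∀ v : V, K3deg G v ≤ 21 := by
    intro v
    have h1 : eo G (Rv G v) ≤ (Rv G v).card • 6 :=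
      Finset.sum_le_card_nsmul _ _ _ fun w hw => hm6 v w hw
    rw [h7R v, smul_eq_mul] at h1
    have h2 := heoR v
    omega
  -- lower bound for `a w` when `w` is complete in `Rv v`
  have complete_lb : ∀ v w : V, w ∈ Rv G v → (N w ∩ Rv G v).card = 6 →
      eo G (Rv G v) ≤ 2 * K3deg G w + 12 := by
    intro v w hw h6
    have hsubE : N w ∩ Rv G v ⊆ (Rv G v).erase w := NRsub_erase
    have hcE : ((Rv G v).erase w).card = 6 := by
      rw [Finset.card_erase_of_mem hw, h7R v]
    have heq : N w ∩ Rv G v = (Rv G v).erase w :=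
      Finset.eq_of_subset_of_card_le hsubE (by omega)
    have hwE : w ∉ (Rv G v).erase w := Finset.notMem_erase w _
    have hins : insert w ((Rv G v).erase w) = Rv G v := Finset.insert_erase hw
    have heo1 : eo G (Rv G v) = eo G ((Rv G v).erase w) + 2 * (N w ∩ (Rv G v).erase w).card := by
      conv_lhs => rw [← hins]
      rw [L_insert hwE]
    have hNwE : N w ∩ (Rv G v).erase w = N w ∩ Rv G v := by
      ext a
      simp only [Finset.mem_inter, Finset.mem_erase]
      constructor
      · rintro ⟨h1, _, h3⟩; exact ⟨h1, h3⟩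
      · rintro ⟨h1, h2⟩
        exact ⟨h1, fun hc => G.notMem_neighborFinset_self w (hc ▸ h1), h2⟩
    have hmono : eo G ((Rv G v).erase w) ≤ eo G (N w) := by
      refine L_mono ?_
      rw [← heq]; exact Finset.inter_subset_left
    have hkey := KEY' (G := G) w
    rw [hNwE, h6] at heo1
    omega
  -- no vertex has K3deg = 21
  have ha20 : ∀ v : V, K3deg G v ≤ 20 := by
    intro v
    by_contra hc
    have hv21 : K3deg G v = 21 := by have := ha21 v; omega
    have hEo42 : eo G (Rv G v) = 42 := by rw [heoR v, hv21]
    have hall6 : ∀ w ∈ Rv G v, (N w ∩ Rv G v).card = 6 := by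
      by_contra hcc
      push_neg at hcc
      obtain ⟨w0, hw0, hne6⟩ := hcc
      have hlt : ∑ w ∈ Rv G v, (N w ∩ Rv G v).card < ∑ w ∈ Rv G v, 6 := by
        refine Finset.sum_lt_sum (fun w hw => hm6 v w hw) ⟨w0, hw0, ?_⟩
        have := hm6 v w0 hw0; omega
      rw [Finset.sum_const, h7R v, smul_eq_mul] at hlt
      have : eo G (Rv G v) = ∑ w ∈ Rv G v, (N w ∩ Rv G v).card := rfl
      omega
    have hbound : ∀ w ∈ Rv G v, K3deg G w ∈ Finset.Icc 15 20 := by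
      intro w hw
      have h1 := complete_lb v w hw (hall6 w hw)
      rw [hEo42] at h1
      refine Finset.mem_Icc.2 ⟨by omega, ?_⟩
      have h2 := ha21 w
      rcases Nat.lt_or_ge (K3deg G w) 21 with h | h
      · omega
      · exfalso
        have : K3deg G w = K3deg G v := by omega
        exact v_notMem_Rv ((hirr w v this) ▸ hw)
    have hcardle := Finset.card_le_card_of_injOn (K3deg G) hbound
      (fun x _ y _ hxy => hirr x y hxy)
    rw [h7R v, Nat.card_Icc] at hcardle
    omega
  -- the image of K3deg misses exactly one value μ of Icc 4 20, and 3 ∣ μ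
  set A : Finset ℕ := univ.image (K3deg G) with hA
  have hAsub : A ⊆ Finset.Icc 4 20 := by
    intro x hx
    obtain ⟨u, _, rfl⟩ := Finset.mem_image.1 hx
    exact Finset.mem_Icc.2 ⟨ha4 u, ha20 u⟩
  have hAcard : A.card = 16 := by
    rw [hA, Finset.card_image_of_injective _ (fun x y hxy => hirr x y hxy),
      Finset.card_univ, h16]
  have hBcard : (Finset.Icc 4 20 \ A).card = 1 := by
    rw [Finset.card_sdiff_of_subset hAsub, Nat.card_Icc, hAcard]
  obtain ⟨μ, hB⟩ := Finset.card_eq_one.1 hBcard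
  have hsum204 : μ + ∑ u : V, K3deg G u = 204 := by
    have h1 := Finset.sum_sdiff (f := id) hAsub
    simp only [id_eq] at h1
    rw [hB, Finset.sum_singleton] at h1
    have h2 : ∑ x ∈ Finset.Icc 4 20, x = 204 := by decide
    have h3 : ∑ x ∈ A, x = ∑ u : V, K3deg G u := by
      rw [hA]
      exact Finset.sum_image fun x _ y _ hxy => hirr x y hxy
    omega
  have hdvd := L_tri3 (G := G)
  have hμ3 : μ % 3 = 0 := by omega
  have hval : ∀ k : ℕ, 4 ≤ k → k ≤ 20 → k % 3 ≠ 0 → ∃ u : V, K3deg G u = k := by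
    intro k h4 h20 h3
    have hkA : k ∈ A := by
      by_contra hkA
      have : k ∈ Finset.Icc 4 20 \ A :=
        Finset.mem_sdiff.2 ⟨Finset.mem_Icc.2 ⟨h4, h20⟩, hkA⟩
      rw [hB, Finset.mem_singleton] at this
      omega
    obtain ⟨u, _, hu⟩ := Finset.mem_image.1 hkA
    exact ⟨u, hu⟩
  obtain ⟨v, hv⟩ := hval 20 (by omega) (by omega) (by omega)
  obtain ⟨x4, hx4⟩ := hval 4 (by omega) (by omega) (by omega)
  obtain ⟨x5, hx5⟩ := hval 5 (by omega) (by omega) (by omega)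
  obtain ⟨x7, hx7⟩ := hval 7 (by omega) (by omega) (by omega)
  -- analysis around the vertex v with K3deg v = 20
  have hEo40 : eo G (Rv G v) = 40 := by rw [heoR v, hv]
  have hSm : ∑ w ∈ Rv G v, (N w ∩ Rv G v).card = 40 := by
    rw [show (∑ w ∈ Rv G v, (N w ∩ Rv G v).card) = eo G (Rv G v) from rfl, hEo40]
  have hdefsum : ∑ w ∈ Rv G v, (6 - (N w ∩ Rv G v).card) = 2 := by
    have h1 : ∑ w ∈ Rv G v, ((N w ∩ Rv G v).card + (6 - (N w ∩ Rv G v).card))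
        = ∑ w ∈ Rv G v, 6 :=
      Finset.sum_congr rfl fun w hw => by have := hm6 v w hw; omega
    rw [Finset.sum_add_distrib, Finset.sum_const, h7R v, smul_eq_mul] at h1
    omega
  have hq5gen : ∀ w q : V, w ∈ Rv G v → q ∈ Rv G v → q ≠ w → q ∉ N w →
      (N q ∩ Rv G v).card ≤ 5 := by
    intro w q hwR hqR hqw hnadj
    have hsub : N q ∩ Rv G v ⊆ ((Rv G v).erase q).erase w := by
      intro a ha
      obtain ⟨ha1, ha2⟩ := Finset.mem_inter.1 ha
      refine Finset.mem_erase.2 ⟨fun hc => ?_, Finset.mem_erase.2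
        ⟨fun hc => G.notMem_neighborFinset_self q (hc ▸ ha1), ha2⟩⟩
      rw [hc, SimpleGraph.mem_neighborFinset] at ha1
      exact hnadj ((SimpleGraph.mem_neighborFinset G w q).2 ha1.symm)
    have hcard : (((Rv G v).erase q).erase w).card = 5 := by
      rw [Finset.card_erase_of_mem (Finset.mem_erase.2 ⟨fun hc => hqw hc.symm, hwR⟩),
        Finset.card_erase_of_mem hqR, h7R v]
    have := Finset.card_le_card hsub
    omega
  have hm56 : ∀ w ∈ Rv G v, 5 ≤ (N w ∩ Rv G v).card := by
    intro w hw
    set Dw := (Rv G v).erase w \ N w with hDw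
    have hDcard : Dw.card = 6 - (N w ∩ Rv G v).card := by
      have h1 : ((Rv G v).erase w ∩ N w) = N w ∩ Rv G v := by
        ext a
        simp only [Finset.mem_inter, Finset.mem_erase]
        constructor
        · rintro ⟨⟨_, h2⟩, h3⟩; exact ⟨h3, h2⟩
        · rintro ⟨h1, h2⟩
          exact ⟨⟨fun hc => G.notMem_neighborFinset_self w (hc ▸ h1), h2⟩, h1⟩
      have h2 : Dw.card + ((Rv G v).erase w ∩ N w).card = ((Rv G v).erase w).card :=
        Finset.card_sdiff_add_card_inter _ _
      rw [h1, Finset.card_erase_of_mem hw, h7R v] at h2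
      have h3 := hm6 v w hw
      omega
    have hq5 : ∀ q ∈ Dw, 1 ≤ 6 - (N q ∩ Rv G v).card := by
      intro q hq
      obtain ⟨hq1, hq2⟩ := Finset.mem_sdiff.1 hq
      obtain ⟨hqw, hqR⟩ := Finset.mem_erase.1 hq1
      have h6 := hm6 v q hqR
      have := hq5gen w q hw hqR hqw hq2
      omega
    have hD1 : Dw.card ≤ ∑ q ∈ Dw, (6 - (N q ∩ Rv G v).card) := by
      have := Finset.card_nsmul_le_sum Dw (fun q => 6 - (N q ∩ Rv G v).card) 1 hq5
      rw [smul_eq_mul, mul_one] at this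
      exact this
    have hsub2 : insert w Dw ⊆ Rv G v := by
      intro a ha
      rcases Finset.mem_insert.1 ha with rfl | ha
      · exact hw
      · exact Finset.mem_of_mem_erase (Finset.mem_sdiff.1 ha).1
    have hwD : w ∉ Dw := fun hc => Finset.notMem_erase w _ (Finset.mem_sdiff.1 hc).1
    have h2 : ∑ u ∈ insert w Dw, (6 - (N u ∩ Rv G v).card) ≤ 2 := by
      calc ∑ u ∈ insert w Dw, (6 - (N u ∩ Rv G v).card)
          ≤ ∑ u ∈ Rv G v, (6 - (N u ∩ Rv G v).card) := Finset.sum_le_sum_of_subset hsub2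
        _ = 2 := hdefsum
    rw [Finset.sum_insert hwD] at h2
    have h3 := hm6 v w hw
    omega
  have hawB : ∀ w ∈ Rv G v, 10 ≤ K3deg G w ∧ K3deg G w ≤ 19 := by
    intro w hw
    have hup : K3deg G w ≤ 19 := by
      have h1 := ha20 w
      rcases Nat.lt_or_ge (K3deg G w) 20 with h | h
      · omega
      · exfalso
        have h2 : K3deg G w = K3deg G v := by omega
        exact v_notMem_Rv ((hirr w v h2) ▸ hw)
    refine ⟨?_, hup⟩
    rcases (by have := hm56 w hw; have := hm6 v w hw; omega :
        (N w ∩ Rv G v).card = 6 ∨ (N w ∩ Rv G v).card = 5) with h6 | h5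
    · have := complete_lb v w hw h6
      omega
    · have hAsubR : N w ∩ Rv G v ⊆ Rv G v := Finset.inter_subset_right
      have hcdiff : (Rv G v \ (N w ∩ Rv G v)).card = 2 := by
        rw [Finset.card_sdiff_of_subset hAsubR, h7R v, h5]
      have hwdiff : w ∈ Rv G v \ (N w ∩ Rv G v) := Finset.mem_sdiff.2
        ⟨hw, fun hc => G.notMem_neighborFinset_self w (Finset.mem_inter.1 hc).1⟩
      obtain ⟨q, hqmem, hqne⟩ := Finset.exists_mem_ne (by omega :
        1 < (Rv G v \ (N w ∩ Rv G v)).card) w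
      have hqR : q ∈ Rv G v := (Finset.mem_sdiff.1 hqmem).1
      have hqNw : q ∉ N w := fun hc =>
        (Finset.mem_sdiff.1 hqmem).2 (Finset.mem_inter.2 ⟨hc, hqR⟩)
      have hq5' := hq5gen w q hw hqR hqne hqNw
      have hdiffeq : Rv G v \ (N w ∩ Rv G v) = {w, q} := by
        refine (Finset.eq_of_subset_of_card_le ?_ ?_).symm
        · intro a ha
          rcases Finset.mem_insert.1 ha with rfl | ha
          · exact hwdiff
          · rw [Finset.mem_singleton] at ha; subst ha; exact hqmem
        · rw [Finset.card_insert_of_notMem (by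
            rw [Finset.mem_singleton]; exact fun hc => hqne hc.symm),
            Finset.card_singleton, hcdiff]
      have hLd := L_diff (G := G) hAsubR
      rw [hdiffeq, Finset.sum_pair (fun hc => hqne hc.symm)] at hLd
      have hmono : eo G (N w ∩ Rv G v) ≤ 2 * K3deg G w := by
        rw [KEY']; exact L_mono Finset.inter_subset_left
      omega
  -- at least 5 complete vertices in Rv v, each with K3deg in [14,19]
  have hS6sub : ∀ w ∈ (Rv G v).filter (fun w => (N w ∩ Rv G v).card = 6),
      K3deg G w ∈ Finset.Icc 14 19 := by
    intro w hw
    obtain ⟨hwR, h6⟩ := Finset.mem_filter.1 hw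
    have h1 := complete_lb v w hwR h6
    rw [hEo40] at h1
    exact Finset.mem_Icc.2 ⟨by omega, (hawB w hwR).2⟩
  have hS6card : 5 ≤ ((Rv G v).filter (fun w => (N w ∩ Rv G v).card = 6)).card := by
    have hTsum : ((Rv G v).filter (fun w => ¬ (N w ∩ Rv G v).card = 6)).card
        ≤ ∑ w ∈ Rv G v, (6 - (N w ∩ Rv G v).card) := by
      calc ((Rv G v).filter (fun w => ¬ (N w ∩ Rv G v).card = 6)).card
          ≤ ∑ w ∈ (Rv G v).filter (fun w => ¬ (N w ∩ Rv G v).card = 6),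
              (6 - (N w ∩ Rv G v).card) := by
            have h1 := Finset.card_nsmul_le_sum
              ((Rv G v).filter (fun w => ¬ (N w ∩ Rv G v).card = 6))
              (fun w => 6 - (N w ∩ Rv G v).card) 1 (fun w hw => by
                obtain ⟨hwR, hne⟩ := Finset.mem_filter.1 hw
                have := hm6 v w hwR
                show 1 ≤ 6 - (N w ∩ Rv G v).card
                omega)
            rw [smul_eq_mul, mul_one] at h1
            exact h1
        _ ≤ ∑ w ∈ Rv G v, (6 - (N w ∩ Rv G v).card) :=
            Finset.sum_le_sum_of_subset (Finset.filter_subset _ _)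
    have hsplitc := Finset.card_filter_add_card_filter_not
      (s := Rv G v) (p := fun w => (N w ∩ Rv G v).card = 6)
    rw [h7R v] at hsplitc
    rw [hdefsum] at hTsum
    omega
  -- all small-degree vertices are neighbors of v
  have hNvmem : ∀ u : V, K3deg G u ≤ 9 → u ∈ N v := by
    intro u hu
    have h1 : u ≠ v := fun hc => by rw [hc, hv] at hu; omega
    have h2 : u ∉ Rv G v := fun hc => by have := (hawB u hc).1; omega
    have h3 : u ∈ N v ∪ Rv G v := by
      rw [NR_union]
      exact Finset.mem_erase.2 ⟨h1, Finset.mem_univ u⟩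
    rcases Finset.mem_union.1 h3 with h | h
    · exact h
    · exact absurd h h2
  have hbigsub : ∀ x ∈ (N v).filter (fun x => 14 ≤ K3deg G x),
      K3deg G x ∈ Finset.Icc 14 19 := by
    intro x hx
    obtain ⟨hxN, h14⟩ := Finset.mem_filter.1 hx
    refine Finset.mem_Icc.2 ⟨h14, ?_⟩
    have h1 := ha20 x
    rcases Nat.lt_or_ge (K3deg G x) 20 with h | h
    · omega
    · exfalso
      have h2 : K3deg G x = K3deg G v := by omega
      have h3 := hirr x v h2
      exact G.notMem_neighborFinset_self v (h3 ▸ hxN)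
  have hdisjSB : Disjoint ((Rv G v).filter (fun w => (N w ∩ Rv G v).card = 6))
      ((N v).filter (fun x => 14 ≤ K3deg G x)) :=
    Finset.disjoint_filter_filter (Rv_disj (v := v)).symm
  have hunion : ∀ w ∈ ((Rv G v).filter (fun w => (N w ∩ Rv G v).card = 6)) ∪
      ((N v).filter (fun x => 14 ≤ K3deg G x)), K3deg G w ∈ Finset.Icc 14 19 := by
    intro w hw
    rcases Finset.mem_union.1 hw with h | h
    · exact hS6sub w h
    · exact hbigsub w h
  have hucard := Finset.card_le_card_of_injOn (K3deg G) hunion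
    (fun x _ y _ hxy => hirr x y hxy)
  rw [Finset.card_union_of_disjoint hdisjSB, Nat.card_Icc] at hucard
  have hbigcard : ((N v).filter (fun x => 14 ≤ K3deg G x)).card ≤ 1 := by omega
  -- caps on common neighborhood sizes inside N v
  have hcaps : ∀ x ∈ N v, 40 ≤ 2 * K3deg G x + 12 * (7 - (N x ∩ N v).card) ∧
      (N x ∩ N v).card ≤ 6 := by
    intro x hxN
    have hadjvx : G.Adj v x := (SimpleGraph.mem_neighborFinset G v x).1 hxN
    have hc6 : (N x ∩ N v).card ≤ 6 := L_adj6 hreg hirr hadjvx.symm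
    refine ⟨?_, hc6⟩
    have hSsub : N x ∩ N v ⊆ N v := Finset.inter_subset_right
    have hxS : x ∉ N x ∩ N v := fun hc =>
      G.notMem_neighborFinset_self x (Finset.mem_inter.1 hc).1
    have hxdiff : x ∈ N v \ (N x ∩ N v) := Finset.mem_sdiff.2 ⟨hxN, hxS⟩
    have hdiffcard : (N v \ (N x ∩ N v)).card = 8 - (N x ∩ N v).card := by
      rw [Finset.card_sdiff_of_subset hSsub, hN hreg]
    have h40 : eo G (N v) = 40 := by rw [← KEY' v, hv]
    have hLd := L_diff (G := G) hSsub
    have hsumbound : ∑ y ∈ N v \ (N x ∩ N v), 2 * (N y ∩ N v).card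
        ≤ 2 * (N x ∩ N v).card + 12 * (7 - (N x ∩ N v).card) := by
      have hsplit2 : 2 * (N x ∩ N v).card
          + ∑ y ∈ (N v \ (N x ∩ N v)).erase x, 2 * (N y ∩ N v).card
          = ∑ y ∈ N v \ (N x ∩ N v), 2 * (N y ∩ N v).card :=
        Finset.add_sum_erase _ (fun y => 2 * (N y ∩ N v).card) hxdiff
      have heach : ∀ y ∈ (N v \ (N x ∩ N v)).erase x, 2 * (N y ∩ N v).card ≤ 12 := by
        intro y hy
        have hyN : y ∈ N v := (Finset.mem_sdiff.1 (Finset.mem_erase.1 hy).2).1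
        have hadj : G.Adj y v := ((SimpleGraph.mem_neighborFinset G v y).1 hyN).symm
        have := L_adj6 hreg hirr hadj
        omega
      have hbound2 := Finset.sum_le_card_nsmul _ _ 12 heach
      have hecard : ((N v \ (N x ∩ N v)).erase x).card = 7 - (N x ∩ N v).card := by
        rw [Finset.card_erase_of_mem hxdiff, hdiffcard]
        omega
      rw [hecard, smul_eq_mul] at hbound2
      omega
    have hinsV : insert v (N x ∩ N v) ⊆ N x := by
      intro a ha
      rcases Finset.mem_insert.1 ha with rfl | ha
      · exact (SimpleGraph.mem_neighborFinset G x a).2 hadjvx.symm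
      · exact (Finset.mem_inter.1 ha).1
    have hvS : v ∉ N x ∩ N v := fun hc =>
      G.notMem_neighborFinset_self v (Finset.mem_inter.1 hc).2
    have hNvS : N v ∩ (N x ∩ N v) = N x ∩ N v := Finset.inter_eq_right.2 hSsub
    have heoins : eo G (insert v (N x ∩ N v))
        = eo G (N x ∩ N v) + 2 * (N x ∩ N v).card := by
      rw [L_insert hvS, hNvS]
    have hup2 : eo G (insert v (N x ∩ N v)) ≤ 2 * K3deg G x := by
      rw [KEY']; exact L_mono hinsV
    omega
  -- final counting
  have hsum40 : ∑ x ∈ N v, (N x ∩ N v).card = 40 := by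
    have h1 := KEY (G := G) v
    rw [hv] at h1
    omega
  have hne45 : x4 ≠ x5 := fun hc => by rw [hc, hx5] at hx4; omega
  have hne47 : x4 ≠ x7 := fun hc => by rw [hc, hx7] at hx4; omega
  have hne57 : x5 ≠ x7 := fun hc => by rw [hc, hx7] at hx5; omega
  have hT3 : ({x4, x5, x7} : Finset V) ⊆ N v := by
    intro a ha
    simp only [Finset.mem_insert, Finset.mem_singleton] at ha
    rcases ha with rfl | rfl | rfl
    · exact hNvmem _ (by rw [hx4]; omega)
    · exact hNvmem _ (by rw [hx5]; omega)
    · exact hNvmem _ (by rw [hx7]; omega)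
  have hT3card : ({x4, x5, x7} : Finset V).card = 3 := by
    rw [Finset.card_insert_of_notMem (by simp [hne45, hne47]),
      Finset.card_insert_of_notMem (by simp [hne57]), Finset.card_singleton]
  have hsplitT : ∑ x ∈ N v \ ({x4, x5, x7} : Finset V), (N x ∩ N v).card
      + ∑ x ∈ ({x4, x5, x7} : Finset V), (N x ∩ N v).card
      = ∑ x ∈ N v, (N x ∩ N v).card := Finset.sum_sdiff hT3
  have hTbound : ∑ x ∈ ({x4, x5, x7} : Finset V), (N x ∩ N v).card ≤ 12 := by
    have h1 := Finset.sum_le_card_nsmul ({x4, x5, x7} : Finset V)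
      (fun x => (N x ∩ N v).card) 4 (fun x hx => by
        have hxN := hT3 hx
        have hax : K3deg G x ≤ 7 := by
          simp only [Finset.mem_insert, Finset.mem_singleton] at hx
          rcases hx with rfl | rfl | rfl
          · rw [hx4]; omega
          · rw [hx5]; omega
          · rw [hx7]
        obtain ⟨hcap, hc6⟩ := hcaps x hxN
        show (N x ∩ N v).card ≤ 4
        omega)
    rw [hT3card, smul_eq_mul] at h1
    omega
  have hrest : ∑ x ∈ N v \ ({x4, x5, x7} : Finset V), (N x ∩ N v).card ≤ 26 := by
    have heach : ∀ x ∈ N v \ ({x4, x5, x7} : Finset V),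
        (N x ∩ N v).card ≤ 5 + (if 14 ≤ K3deg G x then 1 else 0) := by
      intro x hx
      have hxN := (Finset.mem_sdiff.1 hx).1
      obtain ⟨hcap, hc6⟩ := hcaps x hxN
      by_cases h14 : 14 ≤ K3deg G x
      · rw [if_pos h14]; omega
      · rw [if_neg h14]; push_neg at h14; omega
    have hsum1 := Finset.sum_le_sum heach
    rw [Finset.sum_add_distrib, Finset.sum_const] at hsum1
    have hcard5 : (N v \ ({x4, x5, x7} : Finset V)).card = 5 := by
      rw [Finset.card_sdiff_of_subset hT3, hN hreg, hT3card]
    have hitesum : ∑ x ∈ N v \ ({x4, x5, x7} : Finset V),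
        (if 14 ≤ K3deg G x then 1 else 0) ≤ 1 := by
      rw [← Finset.card_filter]
      calc ((N v \ ({x4, x5, x7} : Finset V)).filter (fun x => 14 ≤ K3deg G x)).card
          ≤ ((N v).filter (fun x => 14 ≤ K3deg G x)).card :=
            Finset.card_le_card (Finset.filter_subset_filter _ Finset.sdiff_subset)
        _ ≤ 1 := hbigcard
    rw [hcard5, smul_eq_mul] at hsum1
    omega
  omega




end WithReg2

end K3aux

theorem stmt16 {V : Type*} [Fintype V] [DecidableEq V] [Nonempty V]
    (G : SimpleGraph V) [DecidableRel G.Adj]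
    (hreg : G.IsRegularOfDegree 8)
    (hirr : ∀ u w : V, K3deg G u = K3deg G w → u = w) :
    17 ≤ Fintype.card V := by
  classical
  by_contra hlt
  push_neg at hlt
  obtain ⟨v0⟩ := ‹Nonempty V›
  have h9 : 9 ≤ Fintype.card V := by
    have hle := Finset.card_le_card (Finset.subset_univ (insert v0 (G.neighborFinset v0)))
    rw [Finset.card_insert_of_notMem (G.notMem_neighborFinset_self v0),
      K3aux.hN hreg, Finset.card_univ] at hle
    omega
  have hsplit := fun v => K3aux.L_split hreg v
  have hup := fun v => K3aux.SR_upper hreg hirr v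
  have hlow := fun v => K3aux.SR_lower hreg hirr v
  rcases (by omega : Fintype.card V = 9 ∨ Fintype.card V = 10 ∨ Fintype.card V = 11 ∨
      Fintype.card V = 12 ∨ Fintype.card V = 13 ∨ Fintype.card V = 14 ∨
      Fintype.card V = 15 ∨ Fintype.card V = 16) with hn|hn|hn|hn|hn|hn|hn|hn
  · have hIcc : ∀ v : V, K3deg G v ∈ Finset.Icc 28 28 := fun v => Finset.mem_Icc.2 (by
      have h1 := hsplit v; have h2 := hup v; have h3 := hlow v; rw [hn] at h2 h3; omega)
    have hb := K3aux.interval_bound hreg hirr hIcc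
    omega
  · have hIcc : ∀ v : V, K3deg G v ∈ Finset.Icc 25 24 := fun v => Finset.mem_Icc.2 (by
      have h1 := hsplit v; have h2 := hup v; have h3 := hlow v; rw [hn] at h2 h3; omega)
    have hb := K3aux.interval_bound hreg hirr hIcc
    omega
  · have hIcc : ∀ v : V, K3deg G v ∈ Finset.Icc 21 21 := fun v => Finset.mem_Icc.2 (by
      have h1 := hsplit v; have h2 := hup v; have h3 := hlow v; rw [hn] at h2 h3; omega)
    have hb := K3aux.interval_bound hreg hirr hIcc
    omega
  · have hIcc : ∀ v : V, K3deg G v ∈ Finset.Icc 18 19 := fun v => Finset.mem_Icc.2 (by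
      have h1 := hsplit v; have h2 := hup v; have h3 := hlow v; rw [hn] at h2 h3; omega)
    have hb := K3aux.interval_bound hreg hirr hIcc
    omega
  · have hIcc : ∀ v : V, K3deg G v ∈ Finset.Icc 14 18 := fun v => Finset.mem_Icc.2 (by
      have h1 := hsplit v; have h2 := hup v; have h3 := hlow v; rw [hn] at h2 h3; omega)
    have hb := K3aux.interval_bound hreg hirr hIcc
    omega
  · have hIcc : ∀ v : V, K3deg G v ∈ Finset.Icc 11 18 := fun v => Finset.mem_Icc.2 (by
      have h1 := hsplit v; have h2 := hup v; have h3 := hlow v; rw [hn] at h2 h3; omega)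
    have hb := K3aux.interval_bound hreg hirr hIcc
    omega
  · have hIcc : ∀ v : V, K3deg G v ∈ Finset.Icc 7 19 := fun v => Finset.mem_Icc.2 (by
      have h1 := hsplit v; have h2 := hup v; have h3 := hlow v; rw [hn] at h2 h3; omega)
    have hb := K3aux.interval_bound hreg hirr hIcc
    omega
  · exact K3aux.case16 hreg hirr hn
end

section
/- If G is an 8-regular K3-irregular simple graph, then every vertex v of G satisfies K3deg(v) ≤ 22. -/
set_option linter.unusedSectionVars false

section Aux

open Finset

variable {V : Type*} [Fintype V] [DecidableEq V] (G : SimpleGraph V) [DecidableRel G.Adj]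

local notation "N" => G.neighborFinset

lemma pair_count (v : V) :
    2 * K3deg G v = ∑ a ∈ N v, ((N a) ∩ (N v)).card := by
  classical
  have hmemP : ∀ p : V × V, p ∈ ((N v) ×ˢ (N v)).filter (fun p => G.Adj p.1 p.2) ↔
      G.Adj v p.1 ∧ G.Adj v p.2 ∧ G.Adj p.1 p.2 := by
    intro p
    simp [Finset.mem_filter, Finset.mem_product, SimpleGraph.mem_neighborFinset, and_assoc]
  -- Claim 1 : card P = sum
  have claim1 : (((N v) ×ˢ (N v)).filter (fun p => G.Adj p.1 p.2)).card
      = ∑ a ∈ N v, ((N a) ∩ (N v)).card := by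
    rw [Finset.card_eq_sum_card_fiberwise (f := Prod.fst) (t := N v)
      (fun p hp => (Finset.mem_product.1 (Finset.mem_filter.1 hp).1).1)]
    refine Finset.sum_congr rfl fun a ha => ?_
    refine Finset.card_bij (fun p _ => p.2) ?_ ?_ ?_
    · rintro p hp
      rw [Finset.mem_filter] at hp
      obtain ⟨hp1, hp2⟩ := hp
      rw [hmemP] at hp1
      simp only [Finset.mem_inter, SimpleGraph.mem_neighborFinset]
      exact ⟨hp2 ▸ hp1.2.2, hp1.2.1⟩
    · rintro ⟨a1, b1⟩ h1 ⟨a2, b2⟩ h2 h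
      simp only [Finset.mem_filter] at h1 h2
      have e1 : a1 = a := h1.2
      have e2 : a2 = a := h2.2
      simp only at h
      subst e1; subst e2; subst h; rfl
    · intro b hb
      simp only [Finset.mem_inter, SimpleGraph.mem_neighborFinset] at hb
      refine ⟨(a, b), ?_, rfl⟩
      rw [Finset.mem_filter]
      refine ⟨(hmemP (a, b)).2 ⟨?_, hb.2, hb.1⟩, rfl⟩
      rwa [← SimpleGraph.mem_neighborFinset]
  -- Claim 2 : card P = 2 * card T
  have claim2 : (((N v) ×ˢ (N v)).filter (fun p => G.Adj p.1 p.2)).card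
      = 2 * K3deg G v := by
    rw [Finset.card_eq_sum_card_fiberwise (f := fun p => ({v, p.1, p.2} : Finset V))
      (t := (G.cliqueFinset 3).filter (fun t => v ∈ t)) ?side]
    case side =>
      intro p hp
      rw [Finset.mem_coe, hmemP] at hp
      simp only [Finset.mem_coe, Finset.mem_filter, SimpleGraph.mem_cliqueFinset_iff]
      exact ⟨SimpleGraph.is3Clique_triple_iff.2 ⟨hp.1, hp.2.1, hp.2.2⟩, by simp⟩
    rw [Finset.sum_congr rfl (g := fun _ => 2) ?fib, Finset.sum_const, smul_eq_mul, mul_comm]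
    rfl
    case fib =>
      intro s hs
      simp only [Finset.mem_filter, SimpleGraph.mem_cliqueFinset_iff] at hs
      obtain ⟨hclique, hv⟩ := hs
      have hcard : (s.erase v).card = 2 := by
        rw [Finset.card_erase_of_mem hv, hclique.2]
      obtain ⟨a, b, hab, habs⟩ := Finset.card_eq_two.1 hcard
      have has : a ∈ s := Finset.mem_of_mem_erase (habs ▸ (by simp : a ∈ ({a,b} : Finset V)))
      have hbs : b ∈ s := Finset.mem_of_mem_erase (habs ▸ (by simp : b ∈ ({a,b} : Finset V)))
      have hav : a ≠ v := Finset.ne_of_mem_erase (habs ▸ (by simp : a ∈ ({a,b} : Finset V)))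
      have hbv : b ≠ v := Finset.ne_of_mem_erase (habs ▸ (by simp : b ∈ ({a,b} : Finset V)))
      have hvadja : G.Adj v a := hclique.1 hv has (Ne.symm hav)
      have hvadjb : G.Adj v b := hclique.1 hv hbs (Ne.symm hbv)
      have hadjab : G.Adj a b := hclique.1 has hbs hab
      have hs_eq : s = insert v {a, b} := by
        rw [← habs, Finset.insert_erase hv]
      have key : (((N v) ×ˢ (N v)).filter (fun p => G.Adj p.1 p.2)).filter
          (fun p => ({v, p.1, p.2} : Finset V) = s) = {(a,b), (b,a)} := by
        ext ⟨p1, p2⟩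
        simp only [Finset.mem_filter, Finset.mem_insert, Finset.mem_singleton, hmemP,
          Prod.mk.injEq]
        constructor
        · rintro ⟨⟨h1, h2, h3⟩, heq⟩
          have hp1 : p1 ∈ s.erase v := by
            rw [← heq]
            exact Finset.mem_erase.2 ⟨(G.ne_of_adj h1).symm, by simp⟩
          have hp2 : p2 ∈ s.erase v := by
            rw [← heq]
            exact Finset.mem_erase.2 ⟨(G.ne_of_adj h2).symm, by simp⟩
          rw [habs] at hp1 hp2
          simp only [Finset.mem_insert, Finset.mem_singleton] at hp1 hp2
          have hne : p1 ≠ p2 := G.ne_of_adj h3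
          rcases hp1 with h | h <;> rcases hp2 with h' | h'
          · exact absurd (h.trans h'.symm) hne
          · exact Or.inl ⟨h, h'⟩
          · exact Or.inr ⟨h, h'⟩
          · exact absurd (h.trans h'.symm) hne
        · rintro (⟨e1, e2⟩ | ⟨e1, e2⟩) <;> subst e1 <;> subst e2
          · refine ⟨⟨hvadja, hvadjb, hadjab⟩, hs_eq.symm⟩
          · refine ⟨⟨hvadjb, hvadja, hadjab.symm⟩, ?_⟩
            rw [hs_eq]
            ext x
            simp only [Finset.mem_insert, Finset.mem_singleton]
            tauto
      rw [key]
      rw [Finset.card_insert_of_notMem (by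
          intro hmem
          rw [Finset.mem_singleton, Prod.ext_iff] at hmem
          exact hab hmem.1), Finset.card_singleton]
  rw [← claim1, claim2]

lemma card_inter_insert (X T : Finset V) {y : V} (hy : y ∉ T) :
    (X ∩ insert y T).card = (X ∩ T).card + (if y ∈ X then 1 else 0) := by
  by_cases h : y ∈ X
  · rw [if_pos h]
    have he : X ∩ insert y T = insert y (X ∩ T) := by
      ext x
      simp only [Finset.mem_inter, Finset.mem_insert]
      constructor
      · rintro ⟨hx, (rfl | hxT)⟩
        · exact Or.inl rfl
        · exact Or.inr ⟨hx, hxT⟩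
      · rintro (rfl | ⟨hx, hxT⟩)
        · exact ⟨h, Or.inl rfl⟩
        · exact ⟨hx, Or.inr hxT⟩
    rw [he, Finset.card_insert_of_notMem (fun hc => hy (Finset.mem_inter.1 hc).2)]
  · rw [if_neg h]
    have he : X ∩ insert y T = X ∩ T := by
      ext x
      simp only [Finset.mem_inter, Finset.mem_insert]
      constructor
      · rintro ⟨hx, (rfl | hxT)⟩
        · exact absurd hx h
        · exact ⟨hx, hxT⟩
      · rintro ⟨hx, hxT⟩
        exact ⟨hx, Or.inr hxT⟩
    rw [he, add_zero]

lemma sum_ind (S : Finset V) (y : V) :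
    (∑ b ∈ S, if y ∈ N b then 1 else 0) = ((N y) ∩ S).card := by
  rw [← Finset.card_filter]
  congr 1
  ext b
  simp only [Finset.mem_filter, Finset.mem_inter, SimpleGraph.mem_neighborFinset]
  rw [G.adj_comm]
  tauto

lemma value_formula {v a w z : V}
    (hNv : (N v).card = 8) (hNa : (N a).card = 8)
    (hav : G.Adj v a)
    (hw : w ∈ N v) (hwa : w ≠ a) (hwna : w ∉ N a)
    (hS : (N a) ∩ (N v) = ((N v).erase a).erase w)
    (hz : z ∈ N a) (hzv : z ≠ v) (hznv : z ∉ N v) :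
    K3deg G a + ((N w) ∩ (N v)).card = K3deg G v + ((N z) ∩ ((N a) ∩ (N v))).card := by
  classical
  set S : Finset V := ((N v).erase a).erase w with hSdef
  have haNv : a ∈ N v := (G.mem_neighborFinset v a).2 hav
  have hvNa : v ∈ N a := (G.mem_neighborFinset a v).2 hav.symm
  have hvnNv : v ∉ N v := by simp
  have hanNa : a ∉ N a := by simp
  have hznNz : z ∉ N z := by simp
  have hwnNw : w ∉ N w := by simp
  have hwea : w ∈ (N v).erase a := Finset.mem_erase.2 ⟨hwa, hw⟩
  have hcardS : S.card = 6 := by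
    rw [hSdef, Finset.card_erase_of_mem hwea, Finset.card_erase_of_mem haNv, hNv]
  -- basic memberships
  have haS : a ∉ S := fun h => (Finset.mem_erase.1 (Finset.mem_erase.1 h).2).1 rfl
  have hwS : w ∉ S := fun h => (Finset.mem_erase.1 h).1 rfl
  have hSsubNv : S ⊆ N v := fun x hx => Finset.mem_of_mem_erase (Finset.mem_of_mem_erase hx)
  have hSsubNa : S ⊆ N a := fun x hx => (Finset.mem_inter.1 (hS ▸ hx : x ∈ (N a) ∩ (N v))).1
  have hvS : v ∉ S := fun h => hvnNv (hSsubNv h)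
  have hzS : z ∉ S := fun h => hznv (hSsubNv h)
  have hvz : v ≠ z := Ne.symm hzv
  have hNv_eq : N v = insert a (insert w S) := by
    rw [hSdef, Finset.insert_erase hwea, Finset.insert_erase haNv]
  have hNa_eq : N a = insert v (insert z S) := by
    refine (Finset.eq_of_subset_of_card_le ?_ ?_).symm
    · intro x hx
      rcases Finset.mem_insert.1 hx with rfl | hx'
      · exact hvNa
      rcases Finset.mem_insert.1 hx' with rfl | hx''
      · exact hz
      · exact hSsubNa hx''
    · rw [Finset.card_insert_of_notMem (by
        intro h
        rcases Finset.mem_insert.1 h with h' | h'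
        · exact hvz h'
        · exact hvS h'),
        Finset.card_insert_of_notMem hzS, hcardS, hNa]
  -- indicator facts
  have ind_aNa : (if a ∈ N a then (1:ℕ) else 0) = 0 := if_neg hanNa
  have hNaS : (N a) ∩ S = S := Finset.inter_eq_right.2 hSsubNa
  have hNvS : (N v) ∩ S = S := Finset.inter_eq_right.2 hSsubNv
  have hanw : a ∉ insert w S := by
    intro h
    rcases Finset.mem_insert.1 h with h' | h'
    · exact hwa h'.symm
    · exact haS h'
  have hvniz : v ∉ insert z S := by
    intro h
    rcases Finset.mem_insert.1 h with h' | h'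
    · exact hvz h'
    · exact hvS h'
  -- membership negations
  have hanNw : a ∉ N w := by
    intro h
    exact hwna ((G.mem_neighborFinset a w).2 ((G.mem_neighborFinset w a).1 h).symm)
  have hvnNz : v ∉ N z := by
    intro h
    exact hznv ((G.mem_neighborFinset v z).2 ((G.mem_neighborFinset z v).1 h).symm)
  -- dw
  have hww : ((N w) ∩ (N v)).card = ((N w) ∩ S).card := by
    rw [hNv_eq, card_inter_insert _ _ hanw, card_inter_insert _ _ hwS,
      if_neg hanNw, if_neg hwnNw]
    omega
  set E : ℕ := ∑ b ∈ S, ((N b) ∩ S).card with hE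
  set c : ℕ := ((N z) ∩ S).card with hc
  set dw : ℕ := ((N w) ∩ S).card with hdw
  have eq1 : 2 * K3deg G v = 6 + dw + (E + 6 + dw) := by
    have := pair_count G v
    rw [hNv_eq] at this
    rw [Finset.sum_insert hanw, Finset.sum_insert hwS] at this
    have h1 : ((N a) ∩ insert a (insert w S)).card = 6 := by
      rw [card_inter_insert _ _ hanw, card_inter_insert _ _ hwS, if_neg hanNa,
        if_neg hwna, hNaS, hcardS]
    have h2 : ((N w) ∩ insert a (insert w S)).card = dw := by
      rw [card_inter_insert _ _ hanw, card_inter_insert _ _ hwS, if_neg hanNw,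
        if_neg hwnNw, hdw]
      omega
    have h3 : ∑ b ∈ S, ((N b) ∩ insert a (insert w S)).card = E + 6 + dw := by
      have : ∀ b ∈ S, ((N b) ∩ insert a (insert w S)).card
          = ((N b) ∩ S).card + ((if a ∈ N b then 1 else 0) + (if w ∈ N b then 1 else 0)) := by
        intro b _
        rw [card_inter_insert _ _ hanw, card_inter_insert _ _ hwS]
        ring
      rw [Finset.sum_congr rfl this, Finset.sum_add_distrib, Finset.sum_add_distrib,
        sum_ind, sum_ind, hNaS, hcardS, hE, hdw]
      omega
    rw [h1, h2, h3] at this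
    omega
  have eq2 : 2 * K3deg G a = 6 + c + (E + 6 + c) := by
    have := pair_count G a
    rw [hNa_eq] at this
    have hznS : z ∉ S := hzS
    rw [Finset.sum_insert hvniz, Finset.sum_insert hznS] at this
    have h1 : ((N v) ∩ insert v (insert z S)).card = 6 := by
      rw [card_inter_insert _ _ hvniz, card_inter_insert _ _ hzS, if_neg hvnNv,
        if_neg hznv, hNvS, hcardS]
    have h2 : ((N z) ∩ insert v (insert z S)).card = c := by
      rw [card_inter_insert _ _ hvniz, card_inter_insert _ _ hzS, if_neg hvnNz,
        if_neg hznNz, hc]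
      omega
    have h3 : ∑ b ∈ S, ((N b) ∩ insert v (insert z S)).card = E + 6 + c := by
      have : ∀ b ∈ S, ((N b) ∩ insert v (insert z S)).card
          = ((N b) ∩ S).card + ((if v ∈ N b then 1 else 0) + (if z ∈ N b then 1 else 0)) := by
        intro b _
        rw [card_inter_insert _ _ hvniz, card_inter_insert _ _ hzS]
        ring
      rw [Finset.sum_congr rfl this, Finset.sum_add_distrib, Finset.sum_add_distrib,
        sum_ind, sum_ind, hNvS, hcardS, hE, hc]
      omega
    rw [h1, h2, h3] at this
    omega
  rw [hww, hS]
  omega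

lemma full7 {v a : V}
    (hNv : (N v).card = 8) (hNa : (N a).card = 8)
    (hav : G.Adj v a)
    (h7 : ((N a) ∩ (N v)).card = 7) :
    K3deg G a = K3deg G v := by
  classical
  set S : Finset V := (N v).erase a with hSdef
  have haNv : a ∈ N v := (G.mem_neighborFinset v a).2 hav
  have hvNa : v ∈ N a := (G.mem_neighborFinset a v).2 hav.symm
  have hvnNv : v ∉ N v := by simp
  have hanNa : a ∉ N a := by simp
  have hcardS : S.card = 7 := by rw [hSdef, Finset.card_erase_of_mem haNv, hNv]
  have hS : (N a) ∩ (N v) = S := by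
    refine Finset.eq_of_subset_of_card_le ?_ (by omega)
    intro x hx
    obtain ⟨hx1, hx2⟩ := Finset.mem_inter.1 hx
    exact Finset.mem_erase.2 ⟨fun h => hanNa (h ▸ hx1), hx2⟩
  have hSsubNa : S ⊆ N a := fun x hx => (Finset.mem_inter.1 (hS ▸ hx : x ∈ (N a) ∩ (N v))).1
  have hSsubNv : S ⊆ N v := fun x hx => Finset.mem_of_mem_erase hx
  have haS : a ∉ S := fun h => (Finset.mem_erase.1 h).1 rfl
  have hvS : v ∉ S := fun h => hvnNv (hSsubNv h)
  have hNv_eq : N v = insert a S := by rw [hSdef, Finset.insert_erase haNv]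
  have hNa_eq : N a = insert v S := by
    refine (Finset.eq_of_subset_of_card_le ?_ ?_).symm
    · intro x hx
      rcases Finset.mem_insert.1 hx with rfl | hx'
      · exact hvNa
      · exact hSsubNa hx'
    · rw [Finset.card_insert_of_notMem hvS, hcardS, hNa]
  have hNaS : (N a) ∩ S = S := Finset.inter_eq_right.2 hSsubNa
  have hNvS : (N v) ∩ S = S := Finset.inter_eq_right.2 hSsubNv
  set E : ℕ := ∑ b ∈ S, ((N b) ∩ S).card with hE
  have eq1 : 2 * K3deg G v = 7 + (E + 7) := by
    have := pair_count G v
    rw [hNv_eq, Finset.sum_insert haS] at this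
    have h1 : ((N a) ∩ insert a S).card = 7 := by
      rw [card_inter_insert _ _ haS, if_neg hanNa, hNaS, hcardS]
    have h3 : ∑ b ∈ S, ((N b) ∩ insert a S).card = E + 7 := by
      have hper : ∀ b ∈ S, ((N b) ∩ insert a S).card
          = ((N b) ∩ S).card + (if a ∈ N b then 1 else 0) :=
        fun b _ => card_inter_insert _ _ haS
      rw [Finset.sum_congr rfl hper, Finset.sum_add_distrib, sum_ind, hNaS, hcardS, hE]
    rw [h1, h3] at this
    omega
  have eq2 : 2 * K3deg G a = 7 + (E + 7) := by
    have := pair_count G a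
    rw [hNa_eq, Finset.sum_insert hvS] at this
    have h1 : ((N v) ∩ insert v S).card = 7 := by
      rw [card_inter_insert _ _ hvS, if_neg hvnNv, hNvS, hcardS]
    have h3 : ∑ b ∈ S, ((N b) ∩ insert v S).card = E + 7 := by
      have hper : ∀ b ∈ S, ((N b) ∩ insert v S).card
          = ((N b) ∩ S).card + (if v ∈ N b then 1 else 0) :=
        fun b _ => card_inter_insert _ _ hvS
      rw [Finset.sum_congr rfl hper, Finset.sum_add_distrib, sum_ind, hNvS, hcardS, hE]
    rw [h1, h3] at this
    omega
  omega

lemma AStruct {v a : V}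
    (hNv : (N v).card = 8) (hNa : (N a).card = 8)
    (hav : G.Adj v a)
    (h6 : ((N a) ∩ (N v)).card = 6) :
    ∃ w z : V,
      w ∈ N v ∧ w ≠ a ∧ w ∉ N a ∧ ((N a) ∩ (N v) = ((N v).erase a).erase w) ∧
      (∀ x ∈ N v, x ≠ a → x ∉ N a → x = w) ∧
      z ∈ N a ∧ z ≠ v ∧ z ∉ N v ∧ (∀ x ∈ N a, x ≠ v → x ∉ N v → x = z) := by
  classical
  have haNv : a ∈ N v := (G.mem_neighborFinset v a).2 hav
  have hvNa : v ∈ N a := (G.mem_neighborFinset a v).2 hav.symm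
  have hvnNv : v ∉ N v := by simp
  have hanNa : a ∉ N a := by simp
  -- the w part
  have hinter : ((N v).erase a) ∩ (N a) = (N a) ∩ (N v) := by
    ext x
    simp only [Finset.mem_inter, Finset.mem_erase]
    constructor
    · rintro ⟨⟨_, hx2⟩, hx3⟩; exact ⟨hx3, hx2⟩
    · rintro ⟨hx1, hx2⟩
      exact ⟨⟨fun h => hanNa (h ▸ hx1), hx2⟩, hx1⟩
  have hcardD : (((N v).erase a) \ (N a)).card = 1 := by
    have h1 := Finset.card_sdiff_add_card_inter ((N v).erase a) (N a)
    rw [hinter, h6, Finset.card_erase_of_mem haNv, hNv] at h1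
    omega
  obtain ⟨w, hwD⟩ := Finset.card_eq_one.1 hcardD
  have hwmem : w ∈ ((N v).erase a) \ (N a) := hwD ▸ Finset.mem_singleton_self w
  obtain ⟨hwe, hwna⟩ := Finset.mem_sdiff.1 hwmem
  obtain ⟨hwa, hwNv⟩ := Finset.mem_erase.1 hwe
  have hSeq : (N a) ∩ (N v) = ((N v).erase a).erase w := by
    refine Finset.eq_of_subset_of_card_le ?_ ?_
    · intro x hx
      obtain ⟨hx1, hx2⟩ := Finset.mem_inter.1 hx
      refine Finset.mem_erase.2 ⟨fun h => hwna (h ▸ hx1), Finset.mem_erase.2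
        ⟨fun h => hanNa (h ▸ hx1), hx2⟩⟩
    · rw [Finset.card_erase_of_mem hwe, Finset.card_erase_of_mem haNv, hNv, h6]
  have hwuniq : ∀ x ∈ N v, x ≠ a → x ∉ N a → x = w := by
    intro x hx hxa hxna
    have : x ∈ ((N v).erase a) \ (N a) :=
      Finset.mem_sdiff.2 ⟨Finset.mem_erase.2 ⟨hxa, hx⟩, hxna⟩
    rw [hwD] at this
    exact Finset.mem_singleton.1 this
  -- the z part
  have hcardZ : ((N a) \ (insert v (N v))).card = 1 := by
    have h1 := Finset.card_sdiff_add_card_inter (N a) (insert v (N v))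
    rw [card_inter_insert _ _ hvnNv, h6, if_pos hvNa, hNa] at h1
    omega
  obtain ⟨z, hzD⟩ := Finset.card_eq_one.1 hcardZ
  have hzmem : z ∈ (N a) \ (insert v (N v)) := hzD ▸ Finset.mem_singleton_self z
  obtain ⟨hzNa, hzn⟩ := Finset.mem_sdiff.1 hzmem
  have hzv : z ≠ v := fun h => hzn (h ▸ Finset.mem_insert_self v (N v))
  have hznv : z ∉ N v := fun h => hzn (Finset.mem_insert_of_mem h)
  have hzuniq : ∀ x ∈ N a, x ≠ v → x ∉ N v → x = z := by
    intro x hx hxv hxnv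
    have : x ∈ (N a) \ (insert v (N v)) := Finset.mem_sdiff.2 ⟨hx, by
      intro h
      rcases Finset.mem_insert.1 h with h' | h'
      · exact hxv h'
      · exact hxnv h'⟩
    rw [hzD] at this
    exact Finset.mem_singleton.1 this
  exact ⟨w, z, hwNv, hwa, hwna, hSeq, hwuniq, hzNa, hzv, hznv, hzuniq⟩

lemma inter_erase' (X s : Finset V) (y : V) : X ∩ (s.erase y) = (X ∩ s).erase y := by
  ext x
  simp only [Finset.mem_inter, Finset.mem_erase]
  tauto

lemma main_lemma (hreg : G.IsRegularOfDegree 8)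
    (hirr : ∀ u w : V, K3deg G u = K3deg G w → u = w)
    (v : V) (ht : 23 ≤ K3deg G v) : False := by
  classical
  have hNcard : ∀ x : V, (N x).card = 8 := fun x => by
    rw [G.card_neighborFinset_eq_degree]; exact hreg x
  have hvnNv : v ∉ N v := by simp
  set t := K3deg G v with ht_def
  have hsum : ∑ a ∈ N v, ((N a) ∩ (N v)).card = 2 * t := (pair_count G v).symm
  -- internal degree ≤ 6
  have hle6 : ∀ a ∈ N v, ((N a) ∩ (N v)).card ≤ 6 := by
    intro a ha
    have hav : G.Adj v a := (G.mem_neighborFinset v a).1 ha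
    have hle7 : ((N a) ∩ (N v)).card ≤ 7 := by
      have hsub : (N a) ∩ (N v) ⊆ (N a).erase v := by
        intro x hx
        obtain ⟨hx1, hx2⟩ := Finset.mem_inter.1 hx
        exact Finset.mem_erase.2 ⟨fun h => hvnNv (h ▸ hx2), hx1⟩
      calc ((N a) ∩ (N v)).card ≤ ((N a).erase v).card := Finset.card_le_card hsub
        _ = 7 := by
          rw [Finset.card_erase_of_mem ((G.mem_neighborFinset a v).2 hav.symm), hNcard]
    rcases Nat.lt_or_ge ((N a) ∩ (N v)).card 7 with h | h
    · omega
    · exfalso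
      have h7 : ((N a) ∩ (N v)).card = 7 := le_antisymm hle7 h
      have heq := full7 G (hNcard v) (hNcard a) hav h7
      have hav' := hirr a v heq
      exact hvnNv (hav' ▸ ha)
  set A := (N v).filter (fun a => ((N a) ∩ (N v)).card = 6) with hA_def
  set Hb := (N v).filter (fun a => ¬ ((N a) ∩ (N v)).card = 6) with hHb_def
  set H := Hb.card with hH_def
  have hANv : ∀ a ∈ A, a ∈ N v := fun a ha => (Finset.mem_filter.1 ha).1
  have hA6 : ∀ a ∈ A, ((N a) ∩ (N v)).card = 6 := fun a ha => (Finset.mem_filter.1 ha).2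
  have hdichot : ∀ a ∈ N v, a ∈ A ∨ a ∈ Hb := by
    intro a ha
    by_cases h : ((N a) ∩ (N v)).card = 6
    · exact Or.inl (Finset.mem_filter.2 ⟨ha, h⟩)
    · exact Or.inr (Finset.mem_filter.2 ⟨ha, h⟩)
  have hAH : A.card + H = 8 := by
    have hfil : A.card + Hb.card = (N v).card :=
      Finset.card_filter_add_card_filter_not _
    rw [hNcard] at hfil
    exact hfil
  have hHb5 : ∀ h ∈ Hb, ((N h) ∩ (N v)).card ≤ 5 := by
    intro h hh
    have h1 := hle6 h (Finset.mem_filter.1 hh).1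
    have h2 := (Finset.mem_filter.1 hh).2
    omega
  set SHb := ∑ a ∈ Hb, ((N a) ∩ (N v)).card with hSHb_def
  have hsum_split : (∑ a ∈ A, ((N a) ∩ (N v)).card) + SHb = 2 * t := by
    rw [hSHb_def, hA_def, hHb_def, Finset.sum_filter_add_sum_filter_not, hsum]
  have hsumA : ∑ a ∈ A, ((N a) ∩ (N v)).card = 6 * A.card := by
    rw [Finset.sum_congr rfl hA6, Finset.sum_const, smul_eq_mul, mul_comm]
  have hsumHb_le : SHb ≤ 5 * H := by
    rw [hSHb_def, hH_def]
    calc ∑ a ∈ Hb, ((N a) ∩ (N v)).card ≤ ∑ _a ∈ Hb, 5 := Finset.sum_le_sum hHb5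
      _ = 5 * Hb.card := by rw [Finset.sum_const, smul_eq_mul, mul_comm]
  have ht24 : t ≤ 24 := by omega
  have hHle : 2 * t + H ≤ 48 := by omega
  -- hub lower bound
  have hubLB : ∀ h ∈ Hb, 2 * t + H ≤ ((N h) ∩ (N v)).card + 43 := by
    intro h hh
    have herase : ((N h) ∩ (N v)).card + ∑ a ∈ Hb.erase h, ((N a) ∩ (N v)).card = SHb := by
      rw [hSHb_def]
      exact Finset.add_sum_erase Hb (fun a => ((N a) ∩ (N v)).card) hh
    have hcard_erase : (Hb.erase h).card = H - 1 := by
      rw [Finset.card_erase_of_mem hh, hH_def]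
    have hrest : ∑ a ∈ Hb.erase h, ((N a) ∩ (N v)).card ≤ 5 * (H - 1) := by
      calc ∑ a ∈ Hb.erase h, ((N a) ∩ (N v)).card ≤ ∑ _a ∈ Hb.erase h, 5 :=
          Finset.sum_le_sum (fun a ha => hHb5 a (Finset.mem_of_mem_erase ha))
        _ = 5 * (H - 1) := by rw [Finset.sum_const, smul_eq_mul, mul_comm, hcard_erase]
    have hH1 : 1 ≤ H := by
      rw [hH_def]
      exact Finset.card_pos.2 ⟨h, hh⟩
    omega
  -- choose structure
  have hstruct : ∀ a : V, ∃ w z : V, a ∈ A →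
      (w ∈ N v ∧ w ≠ a ∧ w ∉ N a ∧ ((N a) ∩ (N v) = ((N v).erase a).erase w) ∧
      (∀ x ∈ N v, x ≠ a → x ∉ N a → x = w) ∧
      z ∈ N a ∧ z ≠ v ∧ z ∉ N v ∧ (∀ x ∈ N a, x ≠ v → x ∉ N v → x = z)) := by
    intro a
    by_cases ha : a ∈ A
    · obtain ⟨w, z, hp⟩ := AStruct G (hNcard v) (hNcard a)
        ((G.mem_neighborFinset v a).1 (hANv a ha)) (hA6 a ha)
      exact ⟨w, z, fun _ => hp⟩
    · exact ⟨a, a, fun h => absurd h ha⟩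
  choose W Z hWZ using hstruct
  have hWNv : ∀ a ∈ A, W a ∈ N v := fun a ha => (hWZ a ha).1
  have hWa : ∀ a ∈ A, W a ≠ a := fun a ha => (hWZ a ha).2.1
  have hWna : ∀ a ∈ A, W a ∉ N a := fun a ha => (hWZ a ha).2.2.1
  have hSeq : ∀ a ∈ A, (N a) ∩ (N v) = ((N v).erase a).erase (W a) :=
    fun a ha => (hWZ a ha).2.2.2.1
  have hWuniq : ∀ a ∈ A, ∀ x ∈ N v, x ≠ a → x ∉ N a → x = W a :=
    fun a ha => (hWZ a ha).2.2.2.2.1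
  have hZNa : ∀ a ∈ A, Z a ∈ N a := fun a ha => (hWZ a ha).2.2.2.2.2.1
  have hZv : ∀ a ∈ A, Z a ≠ v := fun a ha => (hWZ a ha).2.2.2.2.2.2.1
  have hZnv : ∀ a ∈ A, Z a ∉ N v := fun a ha => (hWZ a ha).2.2.2.2.2.2.2.1
  have hZuniq : ∀ a ∈ A, ∀ x ∈ N a, x ≠ v → x ∉ N v → x = Z a :=
    fun a ha => (hWZ a ha).2.2.2.2.2.2.2.2
  -- value formula with c expressed via D
  have value : ∀ a ∈ A, K3deg G a + ((N (W a)) ∩ (N v)).card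
      = t + ((((N (Z a)) ∩ (N v)).erase a).erase (W a)).card := by
    intro a ha
    have h1 := value_formula G (hNcard v) (hNcard a)
      ((G.mem_neighborFinset v a).1 (hANv a ha))
      (hWNv a ha) (hWa a ha) (hWna a ha) (hSeq a ha)
      (hZNa a ha) (hZv a ha) (hZnv a ha)
    rw [h1, hSeq a ha, inter_erase', inter_erase']
  -- L1' : matching partners are not adjacent to z
  have L1' : ∀ a ∈ A, W a ∈ A → Z a ∉ N (W a) := by
    intro a ha hWA hmem
    have hz_eq : Z a = Z (W a) := hZuniq (W a) hWA (Z a) hmem (hZv a ha) (hZnv a ha)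
    have haNWa : a ∉ N (W a) := by
      intro h
      exact hWna a ha ((G.mem_neighborFinset a (W a)).2 ((G.mem_neighborFinset (W a) a).1 h).symm)
    have hw_eq : a = W (W a) :=
      hWuniq (W a) hWA a (hANv a ha) (Ne.symm (hWa a ha)) haNWa
    have v1 := value a ha
    have v2 := value (W a) hWA
    rw [← hz_eq, ← hw_eq] at v2
    have e1 : ((N (W a)) ∩ (N v)).card = 6 := hA6 (W a) hWA
    have e2 : ((N a) ∩ (N v)).card = 6 := hA6 a ha
    rw [e1] at v1
    rw [e2] at v2
    rw [Finset.erase_right_comm] at v2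
    have : K3deg G a = K3deg G (W a) := by omega
    exact hWa a ha (hirr (W a) a (this.symm))
  -- a is in its own D
  have haD : ∀ a ∈ A, a ∈ (N (Z a)) ∩ (N v) := by
    intro a ha
    refine Finset.mem_inter.2 ⟨?_, hANv a ha⟩
    exact (G.mem_neighborFinset (Z a) a).2 ((G.mem_neighborFinset a (Z a)).1 (hZNa a ha)).symm
  -- members of D ∩ A share the same Z
  have hshareZ : ∀ a ∈ A, ∀ y ∈ A, y ∈ (N (Z a)) ∩ (N v) → Z y = Z a := by
    intro a ha y hy hyD
    have hzy : Z a ∈ N y := (G.mem_neighborFinset y (Z a)).2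
      ((G.mem_neighborFinset (Z a) y).1 (Finset.mem_inter.1 hyD).1).symm
    exact (hZuniq y hy (Z a) hzy (hZv a ha) (hZnv a ha)).symm
  -- cardinality of D ∩ A
  have DAbound : ∀ a ∈ A, (((N (Z a)) ∩ (N v)) ∩ A).card ≤ 1 + H := by
    intro a ha
    set D := (N (Z a)) ∩ (N v) with hD_def
    have hsplit := Finset.card_filter_add_card_filter_not
      (s := D ∩ A) (p := fun y => W y ∈ A)
    have hM : ((D ∩ A).filter (fun y => W y ∈ A)).card ≤ 1 := by
      refine Finset.card_le_one.2 ?_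
      intro y hy y' hy'
      obtain ⟨hyDA, hyW⟩ := Finset.mem_filter.1 hy
      obtain ⟨hy'DA, hy'W⟩ := Finset.mem_filter.1 hy'
      obtain ⟨hyD, hyA⟩ := Finset.mem_inter.1 hyDA
      obtain ⟨hy'D, hy'A⟩ := Finset.mem_inter.1 hy'DA
      have hZy : Z y = Z a := hshareZ a ha y hyA hyD
      have hZy' : Z y' = Z a := hshareZ a ha y' hy'A hy'D
      have vy := value y hyA
      have vy' := value y' hy'A
      rw [hZy] at vy
      rw [hZy'] at vy'
      rw [hA6 (W y) hyW] at vy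
      rw [hA6 (W y') hy'W] at vy'
      have hWyn : W y ∉ D := by
        intro hWD
        have := L1' y hyA hyW
        rw [hZy] at this
        exact this ((G.mem_neighborFinset (W y) (Z a)).2
          ((G.mem_neighborFinset (Z a) (W y)).1 (Finset.mem_inter.1 hWD).1).symm)
      have hWy'n : W y' ∉ D := by
        intro hWD
        have := L1' y' hy'A hy'W
        rw [hZy'] at this
        exact this ((G.mem_neighborFinset (W y') (Z a)).2
          ((G.mem_neighborFinset (Z a) (W y')).1 (Finset.mem_inter.1 hWD).1).symm)
      have cy : ((D.erase y).erase (W y)).card = D.card - 1 := by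
        rw [Finset.erase_eq_of_notMem (fun h => hWyn (Finset.mem_of_mem_erase h)),
          Finset.card_erase_of_mem hyD]
      have cy' : ((D.erase y').erase (W y')).card = D.card - 1 := by
        rw [Finset.erase_eq_of_notMem (fun h => hWy'n (Finset.mem_of_mem_erase h)),
          Finset.card_erase_of_mem hy'D]
      rw [cy] at vy
      rw [cy'] at vy'
      exact hirr y y' (by omega)
    have hP : ((D ∩ A).filter (fun y => ¬ W y ∈ A)).card ≤ H := by
      rw [hH_def]
      refine Finset.card_le_card_of_injOn W ?_ ?_
      · intro y hy
        obtain ⟨hyDA, hyW⟩ := Finset.mem_filter.1 hy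
        obtain ⟨hyD, hyA⟩ := Finset.mem_inter.1 hyDA
        rcases hdichot (W y) (hWNv y hyA) with h | h
        · exact absurd h hyW
        · exact h
      · intro y hy y' hy' hWeq
        simp only [Finset.coe_filter, Set.mem_setOf_eq] at hy hy'
        obtain ⟨hyDA, hyW⟩ := hy
        obtain ⟨hy'DA, hy'W⟩ := hy'
        obtain ⟨hyD, hyA⟩ := Finset.mem_inter.1 hyDA
        obtain ⟨hy'D, hy'A⟩ := Finset.mem_inter.1 hy'DA
        have hZy : Z y = Z a := hshareZ a ha y hyA hyD
        have hZy' : Z y' = Z a := hshareZ a ha y' hy'A hy'D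
        have vy := value y hyA
        have vy' := value y' hy'A
        rw [hZy] at vy
        rw [hZy', ← hWeq] at vy'
        have hWyy : W y ≠ y := hWa y hyA
        have hWyy' : W y ≠ y' := by
          rw [hWeq]; exact hWa y' hy'A
        have ceq : ((D.erase y).erase (W y)).card = ((D.erase y').erase (W y)).card := by
          by_cases hD : W y ∈ D
          · rw [Finset.card_erase_of_mem (Finset.mem_erase.2 ⟨hWyy, hD⟩),
              Finset.card_erase_of_mem (Finset.mem_erase.2 ⟨hWyy', hD⟩),
              Finset.card_erase_of_mem hyD, Finset.card_erase_of_mem hy'D]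
          · rw [Finset.erase_eq_of_notMem (fun h => hD (Finset.mem_of_mem_erase h)),
              Finset.erase_eq_of_notMem (fun h => hD (Finset.mem_of_mem_erase h)),
              Finset.card_erase_of_mem hyD, Finset.card_erase_of_mem hy'D]
        rw [← hD_def] at vy vy'
        rw [ceq] at vy
        exact hirr y y' (by omega)
    have hDA : (D ∩ A).card ≤ 1 + H := by omega
    exact hDA
  -- D is bounded
  have Dbound : ∀ a ∈ A, ((N (Z a)) ∩ (N v)).card ≤ 1 + 2 * H := by
    intro a ha
    set D := (N (Z a)) ∩ (N v) with hD_def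
    have hsub : D ⊆ (D ∩ A) ∪ (D ∩ Hb) := by
      intro x hx
      have hxNv : x ∈ N v := (Finset.mem_inter.1 hx).2
      rcases hdichot x hxNv with h | h
      · exact Finset.mem_union_left _ (Finset.mem_inter.2 ⟨hx, h⟩)
      · exact Finset.mem_union_right _ (Finset.mem_inter.2 ⟨hx, h⟩)
    have h1 : D.card ≤ (D ∩ A).card + (D ∩ Hb).card :=
      le_trans (Finset.card_le_card hsub) (Finset.card_union_le _ _)
    have h2 : (D ∩ Hb).card ≤ H := by
      rw [hH_def]
      exact Finset.card_le_card (Finset.inter_subset_right)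
    have h3 := DAbound a ha
    rw [← hD_def] at h3
    omega
  -- lower bound for all A-values
  have lowerA : ∀ a ∈ A, t ≤ K3deg G a + 6 := by
    intro a ha
    have hv := value a ha
    have hW6 := hle6 (W a) (hWNv a ha)
    omega
  -- upper bound, matching case
  have upperM : ∀ a ∈ A, W a ∈ A → K3deg G a + 6 ≤ t + 2 * H := by
    intro a ha hWA
    have hv := value a ha
    rw [hA6 (W a) hWA] at hv
    have hWnD : W a ∉ (N (Z a)) ∩ (N v) := by
      intro hWD
      exact L1' a ha hWA ((G.mem_neighborFinset (W a) (Z a)).2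
        ((G.mem_neighborFinset (Z a) (W a)).1 (Finset.mem_inter.1 hWD).1).symm)
    have hc : ((((N (Z a)) ∩ (N v)).erase a).erase (W a)).card
        = (((N (Z a)) ∩ (N v)).erase a).card := by
      rw [Finset.erase_eq_of_notMem (fun h => hWnD (Finset.mem_of_mem_erase h))]
    have hc2 : ((((N (Z a)) ∩ (N v)).erase a)).card = ((N (Z a)) ∩ (N v)).card - 1 :=
      Finset.card_erase_of_mem (haD a ha)
    have hD := Dbound a ha
    have haD' := haD a ha
    have hDpos : 1 ≤ ((N (Z a)) ∩ (N v)).card := Finset.card_pos.2 ⟨a, haD'⟩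
    omega
  -- upper bound, hub case
  have upperHub : ∀ a ∈ A, W a ∉ A → K3deg G a + 2 * t + H ≤ 43 + t + 2 * H - 1 := by
    intro a ha hWnA
    have hWHb : W a ∈ Hb := by
      rcases hdichot (W a) (hWNv a ha) with h | h
      · exact absurd h hWnA
      · exact h
    have hv := value a ha
    set D := (N (Z a)) ∩ (N v) with hD_def
    have haD' : a ∈ D := haD a ha
    have hDpos : 1 ≤ D.card := Finset.card_pos.2 ⟨a, haD'⟩
    have hWya : W a ≠ a := hWa a ha
    have hcbound : (((D.erase a).erase (W a))).card + 1 + 1 ≤ 1 + 2 * H := by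
      by_cases hD : W a ∈ D
      · have e1 : ((D.erase a).erase (W a)).card = (D.erase a).card - 1 :=
          Finset.card_erase_of_mem (Finset.mem_erase.2 ⟨hWya, hD⟩)
        have e2 : (D.erase a).card = D.card - 1 := Finset.card_erase_of_mem haD'
        have e3 := Dbound a ha
        rw [← hD_def] at e3
        have hD2 : 2 ≤ D.card := Finset.one_lt_card.2 ⟨a, haD', W a, hD, Ne.symm hWya⟩
        omega
      · have e1 : ((D.erase a).erase (W a)).card = (D.erase a).card := by
          rw [Finset.erase_eq_of_notMem (fun h => hD (Finset.mem_of_mem_erase h))]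
        have e2 : (D.erase a).card = D.card - 1 := Finset.card_erase_of_mem haD'
        -- refined bound : D ∩ Hb misses W a
        have hsub : D ⊆ (D ∩ A) ∪ (D ∩ (Hb.erase (W a))) := by
          intro x hx
          have hxNv : x ∈ N v := (Finset.mem_inter.1 hx).2
          rcases hdichot x hxNv with h | h
          · exact Finset.mem_union_left _ (Finset.mem_inter.2 ⟨hx, h⟩)
          · refine Finset.mem_union_right _ (Finset.mem_inter.2 ⟨hx, Finset.mem_erase.2
              ⟨fun hxw => hD (hxw ▸ hx), h⟩⟩)
        have h1 : D.card ≤ (D ∩ A).card + (D ∩ (Hb.erase (W a))).card :=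
          le_trans (Finset.card_le_card hsub) (Finset.card_union_le _ _)
        have h2 : (D ∩ (Hb.erase (W a))).card ≤ H - 1 := by
          have : (D ∩ (Hb.erase (W a))).card ≤ (Hb.erase (W a)).card :=
            Finset.card_le_card (Finset.inter_subset_right)
          rw [Finset.card_erase_of_mem hWHb] at this
          exact this
        have h3 := DAbound a ha
        rw [← hD_def] at h3
        have hH1 : 1 ≤ H := by
          rw [hH_def]; exact Finset.card_pos.2 ⟨W a, hWHb⟩
        omega
    have hidW := hubLB (W a) hWHb
    omega
  -- endgame
  rcases Nat.eq_or_lt_of_le ht with h23 | h24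
  · -- t = 23
    have h23' : t = 23 := h23.symm
    have hH2 : H ≤ 2 := by omega
    have hH1 : 1 ≤ H := by omega
    have hbounds : ∀ a ∈ A, K3deg G a ∈ Finset.Icc 17 21 := by
      intro a ha
      rw [Finset.mem_Icc]
      have hlow := lowerA a ha
      by_cases hWA : W a ∈ A
      · have := upperM a ha hWA
        omega
      · have := upperHub a ha hWA
        omega
    have hinj : Set.InjOn (K3deg G) A := fun x hx y hy hxy => hirr x y hxy
    have hcard := Finset.card_le_card_of_injOn (K3deg G) hbounds hinj
    rw [Nat.card_Icc] at hcard
    omega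
  · -- t = 24
    have h24' : t = 24 := by omega
    have hH0 : H = 0 := by omega
    have hHbemp : Hb = ∅ := Finset.card_eq_zero.1 hH0
    have hallM : ∀ a ∈ A, W a ∈ A := by
      intro a ha
      rcases hdichot (W a) (hWNv a ha) with h | h
      · exact h
      · rw [hHbemp] at h
        exact absurd h (Finset.notMem_empty _)
    have hvals : ∀ a ∈ A, K3deg G a = 18 := by
      intro a ha
      have h1 := lowerA a ha
      have h2 := upperM a ha (hallM a ha)
      omega
    have hA2 : 1 < A.card := by omega
    obtain ⟨x, hx, y, hy, hxy⟩ := Finset.one_lt_card.1 hA2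
    exact hxy (hirr x y (by rw [hvals x hx, hvals y hy]))

end Aux

theorem stmt17 {V : Type*} [Fintype V] [DecidableEq V]
    (G : SimpleGraph V) [DecidableRel G.Adj]
    (hreg : G.IsRegularOfDegree 8)
    (hirr : ∀ u w : V, K3deg G u = K3deg G w → u = w)
    (v : V) :
    K3deg G v ≤ 22 := by
  by_contra h
  push_neg at h
  exact main_lemma G hreg hirr v h
end

section
/- Every 8-regular K3-irregular simple graph has at most 22 vertices. -/
set_option linter.unusedSectionVars false
set_option maxHeartbeats 1600000

namespace K3aux
open Finset SimpleGraph

variable {V : Type*} [Fintype V] [DecidableEq V] (G : SimpleGraph V) [DecidableRel G.Adj]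

/-- doubled count of adjacent ordered pairs between two finsets -/
def pc (s t : Finset V) : ℕ := ((s ×ˢ t).filter fun p => G.Adj p.1 p.2).card

lemma pc_eq_sum (s t : Finset V) :
    pc G s t = ∑ a ∈ s, (t ∩ G.neighborFinset a).card := by
  unfold pc
  rw [Finset.card_filter, Finset.sum_product]
  refine Finset.sum_congr rfl fun a _ => ?_
  rw [← Finset.card_filter]
  congr 1
  ext b
  simp [SimpleGraph.mem_neighborFinset, and_comm]

lemma pc_comm (s t : Finset V) : pc G s t = pc G t s := by
  unfold pc
  apply Finset.card_bij (fun p _ => p.swap)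
  · intro p hp
    simp only [mem_filter, mem_product] at *
    exact ⟨⟨hp.1.2, hp.1.1⟩, hp.2.symm⟩
  · intro p _ q _ h
    exact Prod.swap_injective h
  · intro p hp
    refine ⟨p.swap, ?_, by simp⟩
    simp only [mem_filter, mem_product] at *
    exact ⟨⟨hp.1.2, hp.1.1⟩, hp.2.symm⟩

lemma pc_insert {x : V} {s : Finset V} (t : Finset V) (hx : x ∉ s) :
    pc G (insert x s) t = (t ∩ G.neighborFinset x).card + pc G s t := by
  rw [pc_eq_sum, Finset.sum_insert hx, pc_eq_sum]

lemma pc_insert_right {x : V} (s : Finset V) {t : Finset V} (hx : x ∉ t) :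
    pc G s (insert x t) = (s ∩ G.neighborFinset x).card + pc G s t := by
  rw [pc_comm, pc_insert G s hx, pc_comm]

lemma pc_insert_both {x : V} {s : Finset V} (hx : x ∉ s) :
    pc G (insert x s) (insert x s) = pc G s s + 2 * (s ∩ G.neighborFinset x).card := by
  rw [pc_insert G (insert x s) hx, pc_insert_right G s hx,
    Finset.insert_inter_of_notMem (SimpleGraph.notMem_neighborFinset_self G x)]
  ring

lemma two_mul_K3deg (v : V) :
    2 * K3deg G v = pc G (G.neighborFinset v) (G.neighborFinset v) := by
  classical
  set Tv := (G.cliqueFinset 3).filter (fun t => v ∈ t) with hTv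
  set pairs := ((G.neighborFinset v ×ˢ G.neighborFinset v).filter fun p => G.Adj p.1 p.2)
    with hpairs
  have H : ∀ p ∈ pairs, (insert v {p.1, p.2} : Finset V) ∈ Tv := by
    intro p hp
    simp only [hpairs, mem_filter, mem_product, SimpleGraph.mem_neighborFinset] at hp
    refine mem_filter.2 ⟨SimpleGraph.mem_cliqueFinset_iff.2 ?_, mem_insert_self _ _⟩
    exact SimpleGraph.is3Clique_triple_iff.2 ⟨hp.1.1, hp.1.2, hp.2⟩
  have key : pairs.card = ∑ T ∈ Tv, (pairs.filter fun p => (insert v {p.1, p.2} : Finset V) = T).card :=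
    Finset.card_eq_sum_card_fiberwise H
  have fib : ∀ T ∈ Tv, (pairs.filter fun p => (insert v {p.1, p.2} : Finset V) = T).card = 2 := by
    intro T hT
    obtain ⟨hTcl, hvT⟩ := mem_filter.1 hT
    have hcl : G.IsNClique 3 T := SimpleGraph.mem_cliqueFinset_iff.1 hTcl
    have h2 : (T.erase v).card = 2 := by
      rw [card_erase_of_mem hvT, hcl.2]
    obtain ⟨a, b, hab, hTe⟩ := Finset.card_eq_two.1 h2
    have haT : a ∈ T := (erase_subset v T) (hTe ▸ mem_insert_self a {b})
    have hbT : b ∈ T := (erase_subset v T) (hTe ▸ mem_insert_of_mem (mem_singleton_self b))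
    have hav : a ≠ v := (mem_erase.1 (hTe ▸ mem_insert_self a {b})).1
    have hbv : b ≠ v := (mem_erase.1 (hTe ▸ mem_insert_of_mem (mem_singleton_self b))).1
    have hadj_ab : G.Adj a b := hcl.1 (by exact_mod_cast haT) (by exact_mod_cast hbT) hab
    have hadj_va : G.Adj v a := hcl.1 (by exact_mod_cast hvT) (by exact_mod_cast haT) hav.symm
    have hadj_vb : G.Adj v b := hcl.1 (by exact_mod_cast hvT) (by exact_mod_cast hbT) hbv.symm
    have hTeq : T = insert v {a, b} := by
      rw [← hTe, Finset.insert_erase hvT]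
    have : (pairs.filter fun p => (insert v {p.1, p.2} : Finset V) = T)
        = {(a, b), (b, a)} := by
      ext p
      simp only [hpairs, mem_filter, mem_product, SimpleGraph.mem_neighborFinset,
        mem_insert, mem_singleton]
      constructor
      · rintro ⟨⟨⟨hp1, hp2⟩, hadj⟩, hfp⟩
        have hp1T : p.1 ∈ T := by
          rw [← hfp]; exact mem_insert_of_mem (mem_insert_self _ _)
        have hp2T : p.2 ∈ T := by
          rw [← hfp]; exact mem_insert_of_mem (mem_insert_of_mem (mem_singleton_self _))
        rw [hTeq] at hp1T hp2T
        simp only [mem_insert, mem_singleton] at hp1T hp2T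
        have h1 : p.1 = a ∨ p.1 = b := hp1T.resolve_left hp1.ne'
        have h2' : p.2 = a ∨ p.2 = b := hp2T.resolve_left hp2.ne'
        have hne : p.1 ≠ p.2 := hadj.ne
        rcases h1 with h1 | h1 <;> rcases h2' with h2'' | h2''
        · exact absurd (h1.trans h2''.symm) hne
        · left; exact Prod.ext h1 h2''
        · right; exact Prod.ext h1 h2''
        · exact absurd (h1.trans h2''.symm) hne
      · rintro (rfl | rfl)
        · exact ⟨⟨⟨hadj_va, hadj_vb⟩, hadj_ab⟩, hTeq.symm⟩
        · exact ⟨⟨⟨hadj_vb, hadj_va⟩, hadj_ab.symm⟩, by rw [Finset.pair_comm]; exact hTeq.symm⟩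
    rw [this]
    rw [card_insert_of_notMem (by simp [Prod.ext_iff, hab]), card_singleton]
  have : pairs.card = 2 * Tv.card := by
    rw [key, Finset.sum_congr rfl fib, Finset.sum_const, smul_eq_mul, mul_comm]
  rw [K3deg, ← hTv, ← this]
  rfl

lemma sum_K3deg : ∑ v : V, K3deg G v = 3 * (G.cliqueFinset 3).card := by
  unfold K3deg
  have h1 : ∀ v : V, ((G.cliqueFinset 3).filter (fun t => v ∈ t)).card
      = ∑ T ∈ G.cliqueFinset 3, if v ∈ T then 1 else 0 := fun v => Finset.card_filter _ _
  simp_rw [h1]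
  rw [Finset.sum_comm]
  have h2 : ∀ T ∈ G.cliqueFinset 3, (∑ v : V, if v ∈ T then 1 else 0) = 3 := by
    intro T hT
    have hc : T.card = 3 := (SimpleGraph.mem_cliqueFinset_iff.1 hT).2
    have : (∑ v : V, if v ∈ T then 1 else 0) = (Finset.univ.filter (fun v => v ∈ T)).card :=
      (Finset.card_filter _ _).symm
    rw [this]
    have : Finset.univ.filter (fun v => v ∈ T) = T := by
      ext a; simp
    rw [this, hc]
  rw [Finset.sum_congr rfl h2, Finset.sum_const, smul_eq_mul, mul_comm]

lemma formula (hreg : G.IsRegularOfDegree 8) (v u : V) (hu : u ∈ G.neighborFinset v)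
    (hc : (G.neighborFinset v ∩ G.neighborFinset u).card = 6) :
    ∃ p x, p ∈ G.neighborFinset v ∧ p ≠ u ∧
      G.neighborFinset v \ G.neighborFinset u = {u, p} ∧
      G.neighborFinset u \ insert v (G.neighborFinset v) = {x} ∧
      K3deg G u + (G.neighborFinset v ∩ G.neighborFinset p).card
        = K3deg G v + ((G.neighborFinset v ∩ G.neighborFinset u) ∩ G.neighborFinset x).card := by
  have hNv8 : (G.neighborFinset v).card = 8 := hreg v
  have hNu8 : (G.neighborFinset u).card = 8 := hreg u
  have hvNv : v ∉ G.neighborFinset v := SimpleGraph.notMem_neighborFinset_self G v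
  have huNu : u ∉ G.neighborFinset u := SimpleGraph.notMem_neighborFinset_self G u
  have hAdjvu : G.Adj v u := (SimpleGraph.mem_neighborFinset G v u).1 hu
  have hvNu : v ∈ G.neighborFinset u := (SimpleGraph.mem_neighborFinset G u v).2 hAdjvu.symm
  set S := G.neighborFinset v ∩ G.neighborFinset u with hSdef
  have hScard : S.card = 6 := hc
  have hvS : v ∉ S := fun h => hvNv (mem_inter.1 h).1
  have huS : u ∉ S := fun h => huNu (mem_inter.1 h).2
  -- extract p
  have hsd : (G.neighborFinset v \ G.neighborFinset u).card = 2 := by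
    have := Finset.card_inter_add_card_sdiff (G.neighborFinset v) (G.neighborFinset u)
    rw [← hSdef] at this
    omega
  have huSd : u ∈ G.neighborFinset v \ G.neighborFinset u := mem_sdiff.2 ⟨hu, huNu⟩
  obtain ⟨a, b, hab, habeq⟩ := Finset.card_eq_two.1 hsd
  have hu_ab : u = a ∨ u = b := by
    have := habeq ▸ huSd
    simpa using this
  obtain ⟨p, hppair, hpu⟩ : ∃ p, G.neighborFinset v \ G.neighborFinset u = {u, p} ∧ p ≠ u := by
    rcases hu_ab with rfl | rfl
    · exact ⟨b, habeq, hab.symm⟩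
    · exact ⟨a, by rw [habeq, Finset.pair_comm], hab⟩
  have hpmem : p ∈ G.neighborFinset v \ G.neighborFinset u := by
    rw [hppair]; exact mem_insert_of_mem (mem_singleton_self p)
  have hpNv : p ∈ G.neighborFinset v := (mem_sdiff.1 hpmem).1
  have hpNu : p ∉ G.neighborFinset u := (mem_sdiff.1 hpmem).2
  have hpS : p ∉ S := fun h => hpNu (mem_inter.1 h).2
  -- extract x
  have hint7 : (G.neighborFinset u ∩ insert v (G.neighborFinset v)).card = 7 := by
    have hset : G.neighborFinset u ∩ insert v (G.neighborFinset v) = insert v S := by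
      ext a
      simp only [hSdef, mem_inter, mem_insert]
      constructor
      · rintro ⟨h1, h2 | h2⟩
        · exact Or.inl h2
        · exact Or.inr ⟨h2, h1⟩
      · rintro (rfl | ⟨h1, h2⟩)
        · exact ⟨hvNu, Or.inl rfl⟩
        · exact ⟨h2, Or.inr h1⟩
    rw [hset, card_insert_of_notMem hvS, hScard]
  have hXcard : (G.neighborFinset u \ insert v (G.neighborFinset v)).card = 1 := by
    have := Finset.card_inter_add_card_sdiff (G.neighborFinset u) (insert v (G.neighborFinset v))
    omega
  obtain ⟨x, hxeq⟩ := Finset.card_eq_one.1 hXcard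
  have hxmem : x ∈ G.neighborFinset u \ insert v (G.neighborFinset v) :=
    hxeq ▸ mem_singleton_self x
  have hxNu : x ∈ G.neighborFinset u := (mem_sdiff.1 hxmem).1
  have hxvNv : x ∉ insert v (G.neighborFinset v) := (mem_sdiff.1 hxmem).2
  have hxv : x ≠ v := fun h => hxvNv (by rw [h]; exact mem_insert_self _ _)
  have hxNv : x ∉ G.neighborFinset v := fun h => hxvNv (mem_insert_of_mem h)
  have hxS : x ∉ S := fun h => hxNv (mem_inter.1 h).1
  -- decomposition of N u
  have hvixS : v ∉ insert x S := by
    simp only [mem_insert]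
    rintro (rfl | h)
    · exact hxv rfl
    · exact hvS h
  have hNu_eq : G.neighborFinset u = insert v (insert x S) := by
    symm
    apply Finset.eq_of_subset_of_card_le
    · intro a ha
      simp only [mem_insert] at ha
      rcases ha with rfl | rfl | h
      · exact hvNu
      · exact hxNu
      · exact (mem_inter.1 h).2
    · rw [card_insert_of_notMem hvixS, card_insert_of_notMem hxS, hScard, hNu8]
  -- decomposition of N v
  have huipS : u ∉ insert p S := by
    simp only [mem_insert]
    rintro (rfl | h)
    · exact hpu rfl
    · exact huS h
  have hNv_eq : G.neighborFinset v = insert u (insert p S) := by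
    symm
    apply Finset.eq_of_subset_of_card_le
    · intro a ha
      simp only [mem_insert] at ha
      rcases ha with rfl | rfl | h
      · exact hu
      · exact hpNv
      · exact (mem_inter.1 h).1
    · rw [card_insert_of_notMem huipS, card_insert_of_notMem hpS, hScard, hNv8]
  -- pc computations
  have h2u : 2 * K3deg G u = pc G S S + 2 * (S ∩ G.neighborFinset x).card + 12 := by
    rw [two_mul_K3deg G u, hNu_eq, pc_insert_both G hvixS, pc_insert_both G hxS]
    have hx_v : (insert x S) ∩ G.neighborFinset v = S := by
      rw [Finset.insert_inter_of_notMem hxNv, Finset.inter_eq_left.2 inter_subset_left]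
    rw [hx_v, hScard]
  have h2v : 2 * K3deg G v = pc G S S + 2 * (S ∩ G.neighborFinset p).card + 12 := by
    rw [two_mul_K3deg G v, hNv_eq, pc_insert_both G huipS, pc_insert_both G hpS]
    have hp_u : (insert p S) ∩ G.neighborFinset u = S := by
      rw [Finset.insert_inter_of_notMem hpNu, Finset.inter_eq_left.2 inter_subset_right]
    rw [hp_u, hScard]
  -- S ∩ N p = Nv ∩ N p
  have hupNp : u ∉ G.neighborFinset p := by
    rw [SimpleGraph.mem_neighborFinset]
    intro h
    exact hpNu ((SimpleGraph.mem_neighborFinset G u p).2 h.symm)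
  have hSp : S ∩ G.neighborFinset p = G.neighborFinset v ∩ G.neighborFinset p := by
    ext a
    simp only [hSdef, mem_inter]
    constructor
    · rintro ⟨⟨h1, _⟩, h3⟩
      exact ⟨h1, h3⟩
    · rintro ⟨haNv, haNp⟩
      have hau : a ≠ u := fun h => hupNp (h ▸ haNp)
      have hap : a ≠ p := fun h => (SimpleGraph.notMem_neighborFinset_self G p) (h ▸ haNp)
      have : a ∈ insert u (insert p S) := hNv_eq ▸ haNv
      simp only [mem_insert, hau, hap, false_or] at this
      exact ⟨mem_inter.1 this, haNp⟩
  refine ⟨p, x, hpNv, hpu, hppair, hxeq, ?_⟩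
  rw [← hSp]
  omega


lemma max_le_22 (hreg : G.IsRegularOfDegree 8) (hinj : Function.Injective (K3deg G))
    (v : V) (hmax : ∀ u, K3deg G u ≤ K3deg G v) : K3deg G v ≤ 22 := by
  by_contra hcon
  push_neg at hcon
  have htv23 : 23 ≤ K3deg G v := hcon
  have hNv8 : (G.neighborFinset v).card = 8 := hreg v
  have hvNv : v ∉ G.neighborFinset v := SimpleGraph.notMem_neighborFinset_self G v
  -- c u ≤ 7
  have hcle : ∀ u ∈ G.neighborFinset v,
      (G.neighborFinset v ∩ G.neighborFinset u).card ≤ 7 := by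
    intro u hu
    have hsub : G.neighborFinset v ∩ G.neighborFinset u ⊆ (G.neighborFinset u).erase v := by
      intro a ha
      exact mem_erase.2 ⟨fun h => hvNv (h ▸ (mem_inter.1 ha).1), (mem_inter.1 ha).2⟩
    calc (G.neighborFinset v ∩ G.neighborFinset u).card
        ≤ ((G.neighborFinset u).erase v).card := card_le_card hsub
      _ = 7 := by
          have hNu8 : (G.neighborFinset u).card = 8 := hreg u
          rw [card_erase_of_mem ((SimpleGraph.mem_neighborFinset G u v).2
            (((SimpleGraph.mem_neighborFinset G v u).1 hu).symm)), hNu8]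
  -- no full vertex
  have hfull : ∀ u ∈ G.neighborFinset v,
      (G.neighborFinset v ∩ G.neighborFinset u).card ≤ 6 := by
    intro u hu
    by_contra h6
    have hc7 : (G.neighborFinset v ∩ G.neighborFinset u).card = 7 :=
      le_antisymm (hcle u hu) (by omega)
    have huNu : u ∉ G.neighborFinset u := SimpleGraph.notMem_neighborFinset_self G u
    have hvNu : v ∈ G.neighborFinset u := (SimpleGraph.mem_neighborFinset G u v).2
      (((SimpleGraph.mem_neighborFinset G v u).1 hu).symm)
    have hScard : ((G.neighborFinset v).erase u).card = 7 := by
      rw [card_erase_of_mem hu, hNv8]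
    have hsub : G.neighborFinset v ∩ G.neighborFinset u ⊆ (G.neighborFinset v).erase u := by
      intro a ha
      exact mem_erase.2 ⟨fun h => huNu (h ▸ (mem_inter.1 ha).2), (mem_inter.1 ha).1⟩
    have hSeq : G.neighborFinset v ∩ G.neighborFinset u = (G.neighborFinset v).erase u :=
      Finset.eq_of_subset_of_card_le hsub (by omega)
    set S := (G.neighborFinset v).erase u with hSdef
    have hvS : v ∉ S := fun h => hvNv (Finset.erase_subset u _ h)
    have huS : u ∉ S := Finset.notMem_erase u _
    have hNv_eq : G.neighborFinset v = insert u S := (Finset.insert_erase hu).symm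
    have hNu_eq : G.neighborFinset u = insert v S := by
      symm
      apply Finset.eq_of_subset_of_card_le
      · intro a ha
        simp only [mem_insert] at ha
        rcases ha with rfl | h
        · exact hvNu
        · exact (mem_inter.1 (hSeq ▸ h)).2
      · have hNu8 : (G.neighborFinset u).card = 8 := hreg u
        rw [card_insert_of_notMem hvS, hScard, hNu8]
    have h2u : 2 * K3deg G u = pc G S S + 2 * (S ∩ G.neighborFinset v).card := by
      rw [two_mul_K3deg G u, hNu_eq, pc_insert_both G hvS]
    have h2v : 2 * K3deg G v = pc G S S + 2 * (S ∩ G.neighborFinset u).card := by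
      rw [two_mul_K3deg G v, hNv_eq, pc_insert_both G huS]
    have e1 : S ∩ G.neighborFinset v = S :=
      Finset.inter_eq_left.2 (Finset.erase_subset u _)
    have e2 : S ∩ G.neighborFinset u = S := by
      rw [← hSeq]
      exact Finset.inter_eq_left.2 inter_subset_right
    have htuv : K3deg G u = K3deg G v := by
      rw [e1] at h2u; rw [e2] at h2v; omega
    have : u = v := hinj htuv
    exact hvNv (this ▸ hu)
  -- sum of codegrees
  have hsum : ∑ u ∈ G.neighborFinset v, (G.neighborFinset v ∩ G.neighborFinset u).card
      = 2 * K3deg G v := by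
    rw [two_mul_K3deg G v, pc_eq_sum]
  -- the class U of codegree-6 neighbors
  set U := (G.neighborFinset v).filter
    (fun u => (G.neighborFinset v ∩ G.neighborFinset u).card = 6) with hUdef
  set U' := (G.neighborFinset v).filter
    (fun u => ¬ (G.neighborFinset v ∩ G.neighborFinset u).card = 6) with hU'def
  -- window
  have hwin : ∀ u ∈ U, K3deg G v ≤ K3deg G u + 6 ∧ K3deg G u < K3deg G v := by
    intro u hu'
    obtain ⟨hu, hc6⟩ := mem_filter.1 hu'
    obtain ⟨p, x, hpNv, _, _, _, heq⟩ := formula G hreg v u hu hc6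
    have hcp : (G.neighborFinset v ∩ G.neighborFinset p).card ≤ 6 := hfull p hpNv
    have hne : u ≠ v := fun h => hvNv (h ▸ hu)
    have htne : K3deg G u ≠ K3deg G v := fun h => hne (hinj h)
    exact ⟨by omega, lt_of_le_of_ne (hmax u) htne⟩
  have hinjU : ∀ s : Finset V, Set.InjOn (K3deg G) s := fun s a _ b _ h => hinj h
  have hUle6 : U.card ≤ 6 := by
    have hmaps : ∀ u ∈ U, K3deg G u ∈ Finset.Icc (K3deg G v - 6) (K3deg G v - 1) := by
      intro u hu
      have := hwin u hu
      rw [mem_Icc]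
      omega
    calc U.card ≤ (Finset.Icc (K3deg G v - 6) (K3deg G v - 1)).card :=
        Finset.card_le_card_of_injOn _ hmaps (hinjU U)
      _ ≤ 6 := by rw [Nat.card_Icc]; omega
  -- counting: tv = 23, |U| = 6, others have codegree 5
  have hsplit : ∑ u ∈ U, (G.neighborFinset v ∩ G.neighborFinset u).card
      + ∑ u ∈ U', (G.neighborFinset v ∩ G.neighborFinset u).card = 2 * K3deg G v := by
    rw [← hsum, hUdef, hU'def, Finset.sum_filter_add_sum_filter_not]
  have hUsum : ∑ u ∈ U, (G.neighborFinset v ∩ G.neighborFinset u).card = 6 * U.card := by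
    rw [Finset.sum_congr rfl (fun u hu => (mem_filter.1 hu).2), Finset.sum_const,
      smul_eq_mul, mul_comm]
  have hU'le : ∀ u ∈ U', (G.neighborFinset v ∩ G.neighborFinset u).card ≤ 5 := by
    intro u hu
    obtain ⟨hu1, hu2⟩ := mem_filter.1 hu
    have := hfull u hu1
    omega
  have hU'sum : ∑ u ∈ U', (G.neighborFinset v ∩ G.neighborFinset u).card ≤ 5 * U'.card := by
    calc ∑ u ∈ U', (G.neighborFinset v ∩ G.neighborFinset u).card
        ≤ ∑ _u ∈ U', 5 := Finset.sum_le_sum hU'le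
      _ = 5 * U'.card := by rw [Finset.sum_const, smul_eq_mul, mul_comm]
  have hcards : U.card + U'.card = 8 := by
    rw [hUdef, hU'def, Finset.card_filter_add_card_filter_not, hNv8]
  have hU6 : U.card = 6 := by omega
  have htv : K3deg G v = 23 := by omega
  have hU'2 : U'.card = 2 := by omega
  have hU'sum10 : ∑ u ∈ U', (G.neighborFinset v ∩ G.neighborFinset u).card = 10 := by omega
  have hU'5 : ∀ u ∈ U', (G.neighborFinset v ∩ G.neighborFinset u).card = 5 := by
    intro u hu
    by_contra h5
    have h4 : (G.neighborFinset v ∩ G.neighborFinset u).card ≤ 4 := by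
      have := hU'le u hu; omega
    have herase : (U'.erase u).card = 1 := by rw [card_erase_of_mem hu, hU'2]
    have hrest : ∑ w ∈ U'.erase u, (G.neighborFinset v ∩ G.neighborFinset w).card ≤ 5 := by
      calc ∑ w ∈ U'.erase u, (G.neighborFinset v ∩ G.neighborFinset w).card
          ≤ ∑ _w ∈ U'.erase u, 5 :=
            Finset.sum_le_sum (fun w hw => hU'le w (Finset.erase_subset u U' hw))
        _ = 5 := by rw [Finset.sum_const, herase]; norm_num
    have hsplit2 : (G.neighborFinset v ∩ G.neighborFinset u).card
        + ∑ w ∈ U'.erase u, (G.neighborFinset v ∩ G.neighborFinset w).card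
        = ∑ w ∈ U', (G.neighborFinset v ∩ G.neighborFinset w).card :=
      Finset.add_sum_erase U' (fun w => (G.neighborFinset v ∩ G.neighborFinset w).card) hu
    omega
  -- image of U is Icc 17 22
  have himg : U.image (K3deg G) = Finset.Icc 17 22 := by
    apply Finset.eq_of_subset_of_card_le
    · intro y hy
      obtain ⟨u, hu, rfl⟩ := mem_image.1 hy
      have := hwin u hu
      rw [mem_Icc]
      omega
    · rw [Nat.card_Icc, Finset.card_image_of_injOn (hinjU U), hU6]
  -- the vertex z with degree 22
  have h22mem : (22 : ℕ) ∈ U.image (K3deg G) := by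
    rw [himg, mem_Icc]; omega
  obtain ⟨z, hzU, hz22⟩ := mem_image.1 h22mem
  obtain ⟨hzNv, hzc6⟩ := mem_filter.1 hzU
  obtain ⟨p, x, hpNv, hpz, hPz, hXz, heqz⟩ := formula G hreg v z hzNv hzc6
  have hxmem : x ∈ G.neighborFinset z \ insert v (G.neighborFinset v) :=
    hXz ▸ mem_singleton_self x
  have hxNz : x ∈ G.neighborFinset z := (mem_sdiff.1 hxmem).1
  have hxvNv : x ∉ insert v (G.neighborFinset v) := (mem_sdiff.1 hxmem).2
  set A := G.neighborFinset v ∩ G.neighborFinset x with hAdef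
  set d := A.card with hddef
  have hzA : z ∈ A := by
    refine mem_inter.2 ⟨hzNv, ?_⟩
    rw [SimpleGraph.mem_neighborFinset]
    exact ((SimpleGraph.mem_neighborFinset G z x).1 hxNz).symm
  -- e_z bound: e_z + 1 ≤ d
  have hez_sub : (G.neighborFinset v ∩ G.neighborFinset z) ∩ G.neighborFinset x ⊆ A.erase z := by
    intro a ha
    obtain ⟨ha1, ha2⟩ := mem_inter.1 ha
    obtain ⟨ha3, ha4⟩ := mem_inter.1 ha1
    refine mem_erase.2 ⟨fun h => ?_, mem_inter.2 ⟨ha3, ha2⟩⟩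
    exact (SimpleGraph.notMem_neighborFinset_self G z) (h ▸ ha4)
  have hez_le : ((G.neighborFinset v ∩ G.neighborFinset z) ∩ G.neighborFinset x).card + 1 ≤ d := by
    have h1 := card_le_card hez_sub
    have h2 : (A.erase z).card + 1 = d := by
      rw [card_erase_of_mem hzA]
      have : 1 ≤ A.card := card_pos.2 ⟨z, hzA⟩
      omega
    omega
  -- general bound for members of A ∩ U
  have hWbound : ∀ w ∈ A, w ∈ U → K3deg G v + d ≤ K3deg G w + 8 := by
    intro w hwA hwU
    obtain ⟨hwNv, hwc6⟩ := mem_filter.1 hwU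
    obtain ⟨q, y, hqNv, hqw, hQchar, hYchar, heqw⟩ := formula G hreg v w hwNv hwc6
    have hxw : x ∈ G.neighborFinset w := by
      rw [SimpleGraph.mem_neighborFinset]
      exact ((SimpleGraph.mem_neighborFinset G x w).1 (mem_inter.1 hwA).2).symm
    have hxy : x = y := by
      have hm : x ∈ G.neighborFinset w \ insert v (G.neighborFinset v) :=
        mem_sdiff.2 ⟨hxw, hxvNv⟩
      rw [hYchar] at hm
      exact mem_singleton.1 hm
    subst hxy
    have hsub : A ⊆ ((G.neighborFinset v ∩ G.neighborFinset w) ∩ G.neighborFinset x)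
        ∪ {w, q} := by
      intro a haA
      by_cases haw : a ∈ G.neighborFinset w
      · exact Finset.mem_union_left _ (mem_inter.2
          ⟨mem_inter.2 ⟨(mem_inter.1 haA).1, haw⟩, (mem_inter.1 haA).2⟩)
      · refine Finset.mem_union_right _ ?_
        rw [← hQchar]
        exact mem_sdiff.2 ⟨(mem_inter.1 haA).1, haw⟩
    have hdle : d ≤ ((G.neighborFinset v ∩ G.neighborFinset w) ∩ G.neighborFinset x).card + 2 := by
      have h1 := card_le_card hsub
      have h2 := Finset.card_union_le
        ((G.neighborFinset v ∩ G.neighborFinset w) ∩ G.neighborFinset x) ({w, q} : Finset V)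
      have h3 : ({w, q} : Finset V).card ≤ 2 := by
        have := Finset.card_insert_le w ({q} : Finset V)
        simpa using this
      omega
    have hcq : (G.neighborFinset v ∩ G.neighborFinset q).card ≤ 6 := hfull q hqNv
    omega
  -- counting |A ∩ U|
  have hAsub : A ⊆ G.neighborFinset v := inter_subset_left
  have hAU' : A \ U ⊆ U' := by
    intro a ha
    obtain ⟨ha1, ha2⟩ := mem_sdiff.1 ha
    refine mem_filter.2 ⟨hAsub ha1, fun hc => ha2 (mem_filter.2 ⟨hAsub ha1, hc⟩)⟩
  have hWge : d ≤ (A ∩ U).card + 2 := by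
    have h1 : (A ∩ U).card + (A \ U).card = d := Finset.card_inter_add_card_sdiff A U
    have h2 : (A \ U).card ≤ 2 := by
      have := card_le_card hAU'
      omega
    omega
  have hWle : (A ∩ U).card ≤ 23 - (d + 15) := by
    have hmaps : ∀ w ∈ A ∩ U, K3deg G w ∈ Finset.Icc (d + 15) 22 := by
      intro w hw
      obtain ⟨hw1, hw2⟩ := mem_inter.1 hw
      have hb := hWbound w hw1 hw2
      have hwin' := hwin w hw2
      rw [mem_Icc]
      omega
    calc (A ∩ U).card ≤ (Finset.Icc (d + 15) 22).card :=
        Finset.card_le_card_of_injOn _ hmaps (hinjU _)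
      _ = 23 - (d + 15) := by rw [Nat.card_Icc]
  have hd5 : d ≤ 5 := by omega
  -- now pin down c_p = 5, e_z = 4, d = 5
  have hcp5 : (G.neighborFinset v ∩ G.neighborFinset p).card = 5 := by
    by_cases hp6 : (G.neighborFinset v ∩ G.neighborFinset p).card = 6
    · exfalso
      -- then e_z = 5, so d ≥ 6
      rw [hz22, htv, hp6] at heqz
      omega
    · exact hU'5 p (mem_filter.2 ⟨hpNv, hp6⟩)
  have hez4 : ((G.neighborFinset v ∩ G.neighborFinset z) ∩ G.neighborFinset x).card = 4 := by
    rw [hz22, htv, hcp5] at heqz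
    omega
  have hd5' : d = 5 := by omega
  -- p ∉ A
  have hEzsub : (G.neighborFinset v ∩ G.neighborFinset z) ∩ G.neighborFinset x ⊆ A := by
    intro a ha
    exact mem_inter.2 ⟨(mem_inter.1 (mem_inter.1 ha).1).1, (mem_inter.1 ha).2⟩
  have hAdiffcard : (A \ ((G.neighborFinset v ∩ G.neighborFinset z) ∩ G.neighborFinset x)).card
      = 1 := by
    rw [card_sdiff_of_subset hEzsub, hez4, ← hddef, hd5']
  have hzdiff : z ∈ A \ ((G.neighborFinset v ∩ G.neighborFinset z) ∩ G.neighborFinset x) := by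
    refine mem_sdiff.2 ⟨hzA, fun hc => ?_⟩
    exact (SimpleGraph.notMem_neighborFinset_self G z) (mem_inter.1 (mem_inter.1 hc).1).2
  have hAdiff : A \ ((G.neighborFinset v ∩ G.neighborFinset z) ∩ G.neighborFinset x) = {z} := by
    symm
    apply Finset.eq_of_subset_of_card_le
    · intro a ha
      rw [mem_singleton.1 ha]
      exact hzdiff
    · rw [card_singleton]
      omega
  have hpNz : p ∉ G.neighborFinset z := by
    have hpmem : p ∈ G.neighborFinset v \ G.neighborFinset z := by
      rw [hPz]; exact mem_insert_of_mem (mem_singleton_self p)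
    exact (mem_sdiff.1 hpmem).2
  have hpA : p ∉ A := by
    intro hp
    have : p ∈ A \ ((G.neighborFinset v ∩ G.neighborFinset z) ∩ G.neighborFinset x) :=
      mem_sdiff.2 ⟨hp, fun hc => hpNz (mem_inter.1 (mem_inter.1 hc).1).2⟩
    rw [hAdiff] at this
    exact hpz (mem_singleton.1 this)
  -- |A ∩ U| ≥ 4
  have hpU' : p ∈ U' := mem_filter.2 ⟨hpNv, by omega⟩
  have hAU'e : A \ U ⊆ U'.erase p := by
    intro a ha
    refine mem_erase.2 ⟨fun h => hpA (h ▸ (mem_sdiff.1 ha).1), hAU' ha⟩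
  have hW4 : 4 ≤ (A ∩ U).card := by
    have h1 : (A ∩ U).card + (A \ U).card = d := Finset.card_inter_add_card_sdiff A U
    have h2 : (A \ U).card ≤ 1 := by
      have := card_le_card hAU'e
      have := card_erase_of_mem hpU'
      omega
    omega
  omega

end K3aux

theorem stmt18 {V : Type*} [Fintype V] [DecidableEq V]
    (G : SimpleGraph V) [DecidableRel G.Adj]
    (hreg : G.IsRegularOfDegree 8)
    (hirr : ∀ u w : V, K3deg G u = K3deg G w → u = w) :
    Fintype.card V ≤ 22 := by
  classical
  have hinj : Function.Injective (K3deg G) := fun u w h => hirr u w h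
  by_contra hcard
  push_neg at hcard
  have hne : (Finset.univ : Finset V).Nonempty := by
    rw [← Finset.card_pos, Finset.card_univ]
    omega
  obtain ⟨v, -, hmax⟩ := Finset.exists_max_image Finset.univ (K3deg G) hne
  have hvle : K3deg G v ≤ 22 :=
    K3aux.max_le_22 G hreg hinj v (fun u => hmax u (Finset.mem_univ u))
  have hall : ∀ u : V, K3deg G u ≤ 22 := fun u => le_trans (hmax u (Finset.mem_univ u)) hvle
  have himgsub : Finset.univ.image (K3deg G) ⊆ Finset.range 23 := by
    intro y hy
    obtain ⟨u, -, rfl⟩ := Finset.mem_image.1 hy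
    rw [Finset.mem_range]
    have := hall u
    omega
  have hcardim : (Finset.univ.image (K3deg G)).card = Fintype.card V := by
    rw [Finset.card_image_of_injective _ hinj, Finset.card_univ]
  have h23 : Fintype.card V = 23 := by
    have := Finset.card_le_card himgsub
    rw [hcardim, Finset.card_range] at this
    omega
  have himg : Finset.univ.image (K3deg G) = Finset.range 23 :=
    Finset.eq_of_subset_of_card_le himgsub (by rw [hcardim, Finset.card_range, h23])
  have hsum : ∑ u : V, K3deg G u = ∑ i ∈ Finset.range 23, i := by
    rw [← himg, Finset.sum_image (fun a _ b _ h => hinj h)]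
  have h253 : (∑ i ∈ Finset.range 23, i) * 2 = 23 * 22 := Finset.sum_range_id_mul_two 23
  have h3 := K3aux.sum_K3deg G
  omega
end

section
/- There exists a 9-regular K3-irregular simple graph on 24 vertices; explicitly, the graph on vertex set {3,4,...,26} whose adjacency is given by N(3)={19,22,21,10,4,11,7,12,8}, N(4)={20,3,6,5,18,16,17,13,9}, N(5)={23,25,10,4,15,11,7,12,8}, N(6)={23,26,21,10,4,14,7,12,8}, N(7)={3,6,5,14,18,16,17,13,9}, N(8)={3,6,5,14,15,16,17,13,9}, N(9)={24,19,26,21,25,4,11,7,8}, N(10)={20,3,6,5,15,18,11,16,17}, N(11)={3,5,10,14,18,16,17,13,9}, N(12)={3,6,5,14,15,18,16,17,13}, N(13)={19,4,15,18,11,16,7,12,8}, N(14)={24,6,15,18,11,17,7,12,8}, N(15)={22,5,10,14,18,16,13,12,8}, N(16)={10,4,15,11,17,13,7,12,8}, N(17)={10,4,14,18,11,16,7,12,8}, N(18)={10,4,14,15,11,17,13,7,12}, N(19)={20,23,24,22,26,25,3,13,9}, N(20)={23,24,19,22,26,21,25,10,4}, N(21)={20,23,24,22,26,25,3,6,9},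 N(22)={20,23,24,19,26,21,25,3,15}, N(23)={20,24,19,22,26,21,25,6,5}, N(24)={20,23,19,22,26,21,25,14,9}, N(25)={20,23,24,19,22,26,21,5,9}, N(26)={20,23,24,19,22,21,25,6,9}, is 9-regular and K3-irregular (each vertex labeled k has K3-degree k). -/
/-- The edges of the discovered 9-regular `K₃`-irregular graph on 24 vertices,
given as pairs of labels in `{3, …, 26}` (each edge listed once, smaller label first). -/
def edgeList19 : List (ℕ × ℕ) := [
  (3, 4), (3, 7), (3, 8), (3, 10), (3, 11), (3, 12), (3, 19), (3, 21),
  (3, 22), (4, 5), (4, 6), (4, 9), (4, 13), (4, 16), (4, 17), (4, 18),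
  (4, 20), (5, 7), (5, 8), (5, 10), (5, 11), (5, 12), (5, 15), (5, 23),
  (5, 25), (6, 7), (6, 8), (6, 10), (6, 12), (6, 14), (6, 21), (6, 23),
  (6, 26), (7, 9), (7, 13), (7, 14), (7, 16), (7, 17), (7, 18), (8, 9),
  (8, 13), (8, 14), (8, 15), (8, 16), (8, 17), (9, 11), (9, 19), (9, 21),
  (9, 24), (9, 25), (9, 26), (10, 11), (10, 15), (10, 16), (10, 17), (10, 18),
  (10, 20), (11, 13), (11, 14), (11, 16), (11, 17), (11, 18), (12, 13), (12, 14),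
  (12, 15), (12, 16), (12, 17), (12, 18), (13, 15), (13, 16), (13, 18), (13, 19),
  (14, 15), (14, 17), (14, 18), (14, 24), (15, 16), (15, 18), (15, 22), (16, 17),
  (17, 18), (19, 20), (19, 22), (19, 23), (19, 24), (19, 25), (19, 26), (20, 21),
  (20, 22), (20, 23), (20, 24), (20, 25), (20, 26), (21, 22), (21, 23), (21, 24),
  (21, 25), (21, 26), (22, 23), (22, 24), (22, 25), (22, 26), (23, 24), (23, 25),
  (23, 26), (24, 25), (24, 26), (25, 26)]

/-- The discovered 9-regular `K₃`-irregular graph, on vertex set `{3, …, 26}`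
(encoded as `Fin 24`, where the vertex `i : Fin 24` carries the label `i + 3`). -/
def G19 : SimpleGraph (Fin 24) where
  Adj i j := ((i : ℕ) + 3, (j : ℕ) + 3) ∈ edgeList19 ∨ ((j : ℕ) + 3, (i : ℕ) + 3) ∈ edgeList19
  symm := ⟨by intro i j h; tauto⟩
  loopless := by
    have h : ∀ i : Fin 24,
        ¬(((i : ℕ) + 3, (i : ℕ) + 3) ∈ edgeList19 ∨ ((i : ℕ) + 3, (i : ℕ) + 3) ∈ edgeList19) := by
      decide
    exact ⟨h⟩

instance : DecidableRel G19.Adj := fun i j =>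
  decidable_of_iff
    (((i : ℕ) + 3, (j : ℕ) + 3) ∈ edgeList19 ∨ ((j : ℕ) + 3, (i : ℕ) + 3) ∈ edgeList19)
    Iff.rfl

lemma K3deg_eq {V : Type*} (G : SimpleGraph V) [Fintype V] [DecidableEq V] [DecidableRel G.Adj]
    (v : V) :
    K3deg G v = (((G.neighborFinset v).powersetCard 2).filter
      (fun s => ∀ a ∈ s, ∀ b ∈ s, a ≠ b → G.Adj a b)).card := by
  unfold K3deg
  apply Finset.card_bij (fun t _ => t.erase v)
  · intro t ht
    simp only [Finset.mem_filter, SimpleGraph.mem_cliqueFinset_iff] at ht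
    obtain ⟨⟨hc, hcard⟩, hv⟩ := ht
    simp only [Finset.mem_filter, Finset.mem_powersetCard]
    refine ⟨⟨?_, ?_⟩, ?_⟩
    · intro a ha
      rw [Finset.mem_erase] at ha
      rw [SimpleGraph.mem_neighborFinset]
      exact hc hv (Finset.mem_coe.mpr ha.2) (Ne.symm ha.1)
    · rw [Finset.card_erase_of_mem hv, hcard]
    · intro a ha b hb hab
      rw [Finset.mem_erase] at ha hb
      exact hc (Finset.mem_coe.mpr ha.2) (Finset.mem_coe.mpr hb.2) hab
  · intro t1 h1 t2 h2 he
    simp only [Finset.mem_filter] at h1 h2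
    rw [← Finset.insert_erase h1.2, ← Finset.insert_erase h2.2, he]
  · intro s hs
    simp only [Finset.mem_filter, Finset.mem_powersetCard] at hs
    obtain ⟨⟨hsub, hcard2⟩, hadj⟩ := hs
    have hv : v ∉ s := fun h =>
      G.loopless.irrefl v (SimpleGraph.mem_neighborFinset _ _ _ |>.mp (hsub h))
    refine ⟨insert v s, ?_, Finset.erase_insert hv⟩
    simp only [Finset.mem_filter, SimpleGraph.mem_cliqueFinset_iff]
    refine ⟨⟨?_, ?_⟩, Finset.mem_insert_self v s⟩
    · intro a ha b hb hab
      simp only [Finset.coe_insert, Set.mem_insert_iff, Finset.mem_coe] at ha hb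
      rcases ha with rfl | ha
      · rcases hb with rfl | hb
        · exact absurd rfl hab
        · exact (SimpleGraph.mem_neighborFinset _ _ _).mp (hsub hb)
      · rcases hb with rfl | hb
        · exact ((SimpleGraph.mem_neighborFinset _ _ _).mp (hsub ha)).symm
        · exact hadj a ha b hb hab
    · rw [Finset.card_insert_of_notMem hv, hcard2]

set_option maxRecDepth 1000000 in
set_option maxHeartbeats 8000000 in
lemma h3' : ∀ v : Fin 24, K3deg G19 v = (v : ℕ) + 3 := by
  intro v
  rw [K3deg_eq]
  revert v
  decide

set_option maxRecDepth 1000000 in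
set_option maxHeartbeats 8000000 in
lemma hdeg' : ∀ v : Fin 24, G19.degree v = 9 := by decide


/-- There exists a 9-regular `K₃`-irregular graph on 24 vertices: the explicit graph `G19`
is 9-regular, all its vertices have pairwise distinct `K₃`-degrees, and in fact the vertex
labeled `k` (i.e. `i : Fin 24` with `k = i + 3`) has `K₃`-degree exactly `k`. -/
theorem stmt19 :
    G19.IsRegularOfDegree 9 ∧
    (∀ u w : Fin 24, K3deg G19 u = K3deg G19 w → u = w) ∧
    (∀ v : Fin 24, K3deg G19 v = (v : ℕ) + 3) := by

  refine ⟨hdeg', ?_, h3'⟩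
  intro u w h
  rw [h3' u, h3' w] at h
  exact Fin.ext (by omega)
end
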